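/- arXiv:1311.1756 — 9 statements merged into one kernel-verified Lean document; each statement's English description precedes it below -/
import Mathlib

section
/- Let f : ℝⁿ → ℝ ∪ {+∞} be standard self-concordant on its open convex effective domain dom f with ∇²f(x) positive definite for every x ∈ dom f, let g : ℝⁿ → ℝ ∪ {+∞} be proper, lower semicontinuous and convex, and let t > 0. If x*_t ∈ dom f ∩ dom g is a minimizer over ℝⁿ of F(x;t) := f(x) + t⁻¹g(x), then for every x ∈ dom f ∩ dom g one has ω(‖x − x*_t‖_{x*_t}) ≤ F(x;t) − F(x*_t;t). -/
open RealInnerProductSpace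

/-- The local norm `‖u‖_x = (uᵀ ∇²f(x) u)^(1/2)`, where `H` stands for the Hessian `∇²f(x)`. -/
noncomputable def locNorm {n : ℕ}
    (H : EuclideanSpace ℝ (Fin n) →L[ℝ] EuclideanSpace ℝ (Fin n))
    (u : EuclideanSpace ℝ (Fin n)) : ℝ :=
  Real.sqrt ⟪u, H u⟫

/-- `f` is standard self-concordant on `s`: along every line, `|φ'''(τ)| ≤ 2 φ''(τ)^(3/2)`. -/
def StandardSelfConcordantOn {n : ℕ} (f : EuclideanSpace ℝ (Fin n) → ℝ)
    (s : Set (EuclideanSpace ℝ (Fin n))) : Prop :=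
  ∀ x ∈ s, ∀ v : EuclideanSpace ℝ (Fin n), ∀ τ : ℝ, x + τ • v ∈ s →
    |iteratedDeriv 3 (fun r : ℝ => f (x + r • v)) τ| ≤
      2 * (iteratedDeriv 2 (fun r : ℝ => f (x + r • v)) τ) ^ ((3 : ℝ) / 2)

open Set

private lemma mono_aux {B b : ℝ → ℝ}
    (hB : ∀ τ ∈ Set.Icc (0:ℝ) 1, HasDerivAt B (b τ) τ)
    (hb : ∀ τ ∈ Set.Icc (0:ℝ) 1, 0 ≤ b τ) :
    ∀ τ ∈ Set.Icc (0:ℝ) 1, B 0 ≤ B τ := by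
  have hmono : MonotoneOn B (Set.Icc 0 1) := by
    apply monotoneOn_of_deriv_nonneg (convex_Icc 0 1)
    · exact fun τ hτ => (hB τ hτ).continuousAt.continuousWithinAt
    · intro τ hτ
      rw [interior_Icc] at hτ
      exact (hB τ (Ioo_subset_Icc_self hτ)).differentiableAt.differentiableWithinAt
    · intro τ hτ
      rw [interior_Icc] at hτ
      rw [(hB τ (Ioo_subset_Icc_self hτ)).deriv]
      exact hb τ (Ioo_subset_Icc_self hτ)
  exact fun τ hτ => hmono (Set.left_mem_Icc.2 zero_le_one) hτ hτ.1

private lemma core_lemma {φ p h q : ℝ → ℝ} {r : ℝ} (hr : 0 < r)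
    (hφ : ∀ τ ∈ Set.Icc (0:ℝ) 1, HasDerivAt φ (p τ) τ)
    (hp : ∀ τ ∈ Set.Icc (0:ℝ) 1, HasDerivAt p (h τ) τ)
    (hh : ∀ τ ∈ Set.Icc (0:ℝ) 1, HasDerivAt h (q τ) τ)
    (hpos : ∀ τ ∈ Set.Icc (0:ℝ) 1, 0 < h τ)
    (hq : ∀ τ ∈ Set.Icc (0:ℝ) 1, |q τ| ≤ 2 * (h τ) ^ ((3:ℝ)/2))
    (h0 : h 0 = r ^ 2) :
    r - Real.log (1 + r) ≤ φ 1 - φ 0 - p 0 := by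
  have h1pos : ∀ τ ∈ Set.Icc (0:ℝ) 1, (0:ℝ) < 1 + τ * r := by
    intro τ hτ
    nlinarith [hτ.1]
  -- rewrite the rpow bound
  have hq' : ∀ τ ∈ Set.Icc (0:ℝ) 1, |q τ| ≤ 2 * (h τ * Real.sqrt (h τ)) := by
    intro τ hτ
    have hpos' := hpos τ hτ
    have : (h τ) ^ ((3:ℝ)/2) = h τ * Real.sqrt (h τ) := by
      rw [show ((3:ℝ)/2) = 1 + 1/2 by norm_num, Real.rpow_add hpos', Real.rpow_one,
        Real.sqrt_eq_rpow]
    exact le_of_le_of_eq (hq τ hτ) (by rw [this])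
  -- Step 1: lower bound on sqrt (h τ)
  have step1 : ∀ τ ∈ Set.Icc (0:ℝ) 1, r ^ 2 / (1 + τ * r) ^ 2 ≤ h τ := by
    have hB : ∀ τ ∈ Set.Icc (0:ℝ) 1,
        HasDerivAt (fun y => y - (Real.sqrt (h y))⁻¹)
          (1 - -(1 / (2 * Real.sqrt (h τ)) * q τ) / Real.sqrt (h τ) ^ 2) τ := by
      intro τ hτ
      have hS : (0:ℝ) < Real.sqrt (h τ) := Real.sqrt_pos.2 (hpos τ hτ)
      have hsq : HasDerivAt (fun y => Real.sqrt (h y)) (1 / (2 * Real.sqrt (h τ)) * q τ) τ :=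
        (Real.hasDerivAt_sqrt (hpos τ hτ).ne').comp τ (hh τ hτ)
      exact (hasDerivAt_id τ).sub (hsq.inv hS.ne')
    have hb : ∀ τ ∈ Set.Icc (0:ℝ) 1,
        0 ≤ 1 - -(1 / (2 * Real.sqrt (h τ)) * q τ) / Real.sqrt (h τ) ^ 2 := by
      intro τ hτ
      have hS : (0:ℝ) < Real.sqrt (h τ) := Real.sqrt_pos.2 (hpos τ hτ)
      have hS2 : Real.sqrt (h τ) ^ 2 = h τ := Real.sq_sqrt (hpos τ hτ).le
      have hbd := hq' τ hτ
      have habs := abs_le.1 hbd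
      have key : -(1 / (2 * Real.sqrt (h τ)) * q τ) / Real.sqrt (h τ) ^ 2
          = -q τ / (2 * (h τ * Real.sqrt (h τ))) := by
        rw [hS2]
        field_simp
      rw [key]
      have hh0 : 0 < h τ := hpos τ hτ
      have hle : -q τ / (2 * (h τ * Real.sqrt (h τ))) ≤ 1 := by
        rw [div_le_one (by positivity)]
        linarith [habs.1]
      linarith
    have hmono := mono_aux hB hb
    intro τ hτ
    have hS : (0:ℝ) < Real.sqrt (h τ) := Real.sqrt_pos.2 (hpos τ hτ)
    have hS0 : Real.sqrt (h 0) = r := by rw [h0, Real.sqrt_sq hr.le]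
    have h1 := h1pos τ hτ
    have hm := hmono τ hτ
    simp only [hS0] at hm
    -- hm : 0 - r⁻¹ ≤ τ - (Real.sqrt (h τ))⁻¹
    have hinv : (Real.sqrt (h τ))⁻¹ ≤ τ + r⁻¹ := by linarith
    have hri : r * r⁻¹ = 1 := mul_inv_cancel₀ hr.ne'
    have hSi : Real.sqrt (h τ) * (Real.sqrt (h τ))⁻¹ = 1 := mul_inv_cancel₀ hS.ne'
    have hkey : r ≤ Real.sqrt (h τ) * (1 + τ * r) := by
      nlinarith [mul_le_mul_of_nonneg_left hinv (by positivity : (0:ℝ) ≤ Real.sqrt (h τ) * r)]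
    have hdiv : r / (1 + τ * r) ≤ Real.sqrt (h τ) := by
      rw [div_le_iff₀ h1]; linarith
    have hsq : (r / (1 + τ * r)) ^ 2 ≤ Real.sqrt (h τ) ^ 2 :=
      pow_le_pow_left₀ (by positivity) hdiv 2
    rw [Real.sq_sqrt (hpos τ hτ).le, div_pow] at hsq
    exact hsq
  -- Step 2: lower bound on p
  have step2 : ∀ τ ∈ Set.Icc (0:ℝ) 1, p 0 + r - r * (1 + τ * r)⁻¹ ≤ p τ := by
    have hA : ∀ τ ∈ Set.Icc (0:ℝ) 1,
        HasDerivAt (fun y => p y + r * (1 + y * r)⁻¹)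
          (h τ + r * (-r / (1 + τ * r) ^ 2)) τ := by
      intro τ hτ
      have h1 := h1pos τ hτ
      have hlin : HasDerivAt (fun y : ℝ => 1 + y * r) r τ := by
        simpa using ((hasDerivAt_id τ).mul_const r).const_add 1
      exact (hp τ hτ).add ((hlin.inv h1.ne').const_mul r)
    have hb : ∀ τ ∈ Set.Icc (0:ℝ) 1, 0 ≤ h τ + r * (-r / (1 + τ * r) ^ 2) := by
      intro τ hτ
      have := step1 τ hτ
      have h1 := h1pos τ hτ
      have : r * (-r / (1 + τ * r) ^ 2) = -(r ^ 2 / (1 + τ * r) ^ 2) := by ring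
      rw [this]
      linarith [step1 τ hτ]
    have hmono := mono_aux hA hb
    intro τ hτ
    have hm := hmono τ hτ
    simp only [zero_mul, add_zero, mul_one, inv_one] at hm
    linarith
  -- Step 3
  have hA2 : ∀ τ ∈ Set.Icc (0:ℝ) 1,
      HasDerivAt (fun y => φ y - y * p 0 - y * r + Real.log (1 + y * r))
        (p τ - p 0 - r + (1 + τ * r)⁻¹ * r) τ := by
    intro τ hτ
    have h1 := h1pos τ hτ
    have hlin : HasDerivAt (fun y : ℝ => 1 + y * r) r τ := by
      simpa using ((hasDerivAt_id τ).mul_const r).const_add 1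
    have hlog : HasDerivAt (fun y : ℝ => Real.log (1 + y * r)) ((1 + τ * r)⁻¹ * r) τ :=
      by have := (Real.hasDerivAt_log h1.ne').comp τ hlin; exact this
    have h' := (((hφ τ hτ).sub ((hasDerivAt_id τ).mul_const (p 0))).sub
      ((hasDerivAt_id τ).mul_const r)).add hlog
    simp only [id_eq, one_mul] at h'; exact h'
  have hb2 : ∀ τ ∈ Set.Icc (0:ℝ) 1, 0 ≤ p τ - p 0 - r + (1 + τ * r)⁻¹ * r := by
    intro τ hτ
    have := step2 τ hτ
    linarith [step2 τ hτ, mul_comm ((1 + τ * r)⁻¹) r]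
  have hmono := mono_aux hA2 hb2
  have hm := hmono 1 (Set.right_mem_Icc.2 zero_le_one)
  simp only [zero_mul, sub_zero, add_zero, mul_zero, one_mul, Real.log_one] at hm
  linarith


/-- for the minimizer `x*_t` of `F(·;t) = f + t⁻¹ g` one has
`ω(‖x − x*_t‖_{x*_t}) ≤ F(x;t) − F(x*_t;t)` for all `x ∈ dom f ∩ dom g`,
where `ω(τ) = τ − ln(1+τ)`. -/
theorem stmt0 {n : ℕ} (f g : EuclideanSpace ℝ (Fin n) → ℝ)
    (df dg : Set (EuclideanSpace ℝ (Fin n)))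
    (hdf_open : IsOpen df) (hdf_conv : Convex ℝ df)
    (hf_smooth : ContDiffOn ℝ 3 f df)
    (hf_sc : StandardSelfConcordantOn f df)
    (hess : EuclideanSpace ℝ (Fin n) →
      EuclideanSpace ℝ (Fin n) →L[ℝ] EuclideanSpace ℝ (Fin n))
    (hhess : ∀ x ∈ df, HasFDerivAt (fun y => gradient f y) (hess x) x)
    (hpd : ∀ x ∈ df, ∀ u : EuclideanSpace ℝ (Fin n), u ≠ 0 → 0 < ⟪u, hess x u⟫)
    (hg_cvx : ConvexOn ℝ dg g) (hg_lsc : LowerSemicontinuousOn g dg)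
    (hg_proper : dg.Nonempty)
    (t : ℝ) (ht : 0 < t)
    (xs : EuclideanSpace ℝ (Fin n)) (hxs : xs ∈ df ∩ dg)
    (hmin : ∀ x ∈ df ∩ dg, f xs + t⁻¹ * g xs ≤ f x + t⁻¹ * g x) :
    ∀ x ∈ df ∩ dg,
      locNorm (hess xs) (x - xs) - Real.log (1 + locNorm (hess xs) (x - xs)) ≤
        (f x + t⁻¹ * g x) - (f xs + t⁻¹ * g xs) := by
  intro x hx
  by_cases hv0 : x - xs = 0
  · have h0 : locNorm (hess xs) (x - xs) = 0 := by
      rw [hv0]; simp [locNorm]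
    rw [h0]
    have := hmin x hx
    simp only [add_zero, Real.log_one, sub_zero, zero_sub, neg_nonpos]
    linarith
  · set v : EuclideanSpace ℝ (Fin n) := x - xs with hv
    set φ : ℝ → ℝ := fun r : ℝ => f (xs + r • v) with hφdef
    set U : Set ℝ := {τ : ℝ | xs + τ • v ∈ df} with hUdef
    have hUopen : IsOpen U :=
      hdf_open.preimage (continuous_const.add (continuous_id.smul continuous_const))
    have hIccU : Set.Icc (0:ℝ) 1 ⊆ U := fun τ hτ =>
      hdf_conv.add_smul_sub_mem hxs.1 hx.1 hτ
    have hcd : ∀ τ : ℝ, HasDerivAt (fun y : ℝ => xs + y • v) v τ := fun τ => by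
      simpa using ((hasDerivAt_id τ).smul_const v).const_add xs
    have hdiff : ∀ τ ∈ U, DifferentiableAt ℝ f (xs + τ • v) := fun τ hτ =>
      (hf_smooth.contDiffAt (hdf_open.mem_nhds hτ)).differentiableAt (by norm_num)
    set p : ℝ → ℝ := fun τ => ⟪v, gradient f (xs + τ • v)⟫ with hpdef
    set h : ℝ → ℝ := fun τ => ⟪v, hess (xs + τ • v) v⟫ with hhdef
    have hφ' : ∀ τ ∈ U, HasDerivAt φ (p τ) τ := by
      intro τ hτ
      have hg := (hdiff τ hτ).hasGradientAt
      have hcomp := hg.hasFDerivAt.comp_hasDerivAt τ (hcd τ)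
      have hval : p τ = (InnerProductSpace.toDual ℝ (EuclideanSpace ℝ (Fin n))
          (gradient f (xs + τ • v))) v := by
        rw [InnerProductSpace.toDual_apply_apply, real_inner_comm]
      rw [hval]
      exact hcomp
    have hp' : ∀ τ ∈ U, HasDerivAt p (h τ) τ := by
      intro τ hτ
      have hG : HasDerivAt (fun y : ℝ => gradient f (xs + y • v)) (hess (xs + τ • v) v) τ :=
        by have := (hhess _ hτ).comp_hasDerivAt τ (hcd τ); exact this
      have hcomp := (innerSL ℝ v).hasFDerivAt.comp_hasDerivAt τ hG
      exact hcomp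
    -- third derivative via smoothness
    have hcsm : ContDiff ℝ 3 (fun y : ℝ => xs + y • v) :=
      contDiff_const.add (contDiff_id.smul contDiff_const)
    have hφsm : ContDiffOn ℝ 3 φ U := hf_smooth.comp hcsm.contDiffOn (fun τ hτ => hτ)
    have hd2 : DifferentiableOn ℝ (iteratedDerivWithin 2 φ U) U :=
      hφsm.differentiableOn_iteratedDerivWithin (by norm_num) hUopen.uniqueDiffOn
    have itw_eq : ∀ m : ℕ, ∀ τ ∈ U, iteratedDerivWithin m φ U τ = iteratedDeriv m φ τ := by
      intro m τ hτ
      rw [iteratedDerivWithin_eq_iteratedFDerivWithin, iteratedDeriv_eq_iteratedFDeriv,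
        iteratedFDerivWithin_of_isOpen m hUopen hτ]
    have e2 : ∀ τ ∈ U, iteratedDeriv 2 φ τ = h τ := by
      intro τ hτ
      have h1 : deriv φ =ᶠ[nhds τ] p :=
        Filter.eventuallyEq_of_mem (hUopen.mem_nhds hτ) (fun y hy => (hφ' y hy).deriv)
      rw [show (2:ℕ) = 1 + 1 from rfl, iteratedDeriv_succ, iteratedDeriv_one,
        h1.deriv_eq]
      exact (hp' τ hτ).deriv
    have hh' : ∀ τ ∈ U, HasDerivAt h (iteratedDeriv 3 φ τ) τ := by
      intro τ hτ
      have hd : DifferentiableAt ℝ (iteratedDerivWithin 2 φ U) τ :=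
        (hd2 τ hτ).differentiableAt (hUopen.mem_nhds hτ)
      have heq : iteratedDerivWithin 2 φ U =ᶠ[nhds τ] h :=
        Filter.eventuallyEq_of_mem (hUopen.mem_nhds hτ)
          (fun y hy => (itw_eq 2 y hy).trans (e2 y hy))
      have hd' : DifferentiableAt ℝ h τ := hd.congr_of_eventuallyEq heq.symm
      have heq2 : h =ᶠ[nhds τ] iteratedDeriv 2 φ :=
        Filter.eventuallyEq_of_mem (hUopen.mem_nhds hτ) (fun y hy => (e2 y hy).symm)
      have hder : deriv h τ = iteratedDeriv 3 φ τ := by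
        rw [show (3:ℕ) = 2 + 1 from rfl, iteratedDeriv_succ, heq2.deriv_eq]
      exact hder ▸ hd'.hasDerivAt
    have hqbd : ∀ τ ∈ Set.Icc (0:ℝ) 1,
        |iteratedDeriv 3 φ τ| ≤ 2 * (h τ) ^ ((3:ℝ)/2) := by
      intro τ hτ
      have hb := hf_sc xs hxs.1 v τ (hIccU hτ)
      rw [← hφdef] at hb
      rwa [e2 τ (hIccU hτ)] at hb
    have hposI : ∀ τ ∈ Set.Icc (0:ℝ) 1, 0 < h τ := fun τ hτ =>
      hpd _ (hIccU hτ) v hv0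
    have hpd0 : 0 < ⟪v, hess xs v⟫ := hpd xs hxs.1 v hv0
    have hr : 0 < locNorm (hess xs) v := Real.sqrt_pos.2 hpd0
    have h0r : h 0 = (locNorm (hess xs) v) ^ 2 := by
      unfold locNorm
      rw [Real.sq_sqrt hpd0.le]
      simp [hhdef]
    have hcore := core_lemma hr
      (fun τ hτ => hφ' τ (hIccU hτ)) (fun τ hτ => hp' τ (hIccU hτ))
      (fun τ hτ => hh' τ (hIccU hτ)) hposI hqbd h0r
    have hφ1 : φ 1 = f x := by
      rw [hφdef]
      show f (xs + (1:ℝ) • v) = f x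
      rw [one_smul, hv]
      congr 1
      abel
    have hφ0 : φ 0 = f xs := by
      rw [hφdef]
      show f (xs + (0:ℝ) • v) = f xs
      rw [zero_smul, add_zero]
    -- first order condition
    have hfo : 0 ≤ p 0 + t⁻¹ * (g x - g xs) := by
      have hD : HasDerivAt φ (p 0) 0 := hφ' 0 (hIccU ⟨le_refl 0, zero_le_one⟩)
      have hslope : Filter.Tendsto (slope φ 0) (nhdsWithin 0 (Set.Ioi 0)) (nhds (p 0)) :=
        (hasDerivAt_iff_tendsto_slope.1 hD).mono_left
          (nhdsWithin_mono 0 (fun y hy => ne_of_gt hy))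
      have hev : ∀ᶠ τ in nhdsWithin (0:ℝ) (Set.Ioi 0),
          -(t⁻¹ * (g x - g xs)) ≤ slope φ 0 τ := by
        filter_upwards [Ioo_mem_nhdsGT_of_mem (Set.left_mem_Ico.2 zero_lt_one)] with τ hτ
        have hτIcc : τ ∈ Set.Icc (0:ℝ) 1 := Ioo_subset_Icc_self hτ
        have hcmem : xs + τ • v ∈ df ∩ dg :=
          ⟨hIccU hτIcc, hg_cvx.1.add_smul_sub_mem hxs.2 hx.2 hτIcc⟩
        have hgc : g (xs + τ • v) ≤ (1 - τ) * g xs + τ * g x := by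
          have hcomb := hg_cvx.2 hxs.2 hx.2
            (by linarith [hτ.2] : (0:ℝ) ≤ 1 - τ) hτ.1.le (by ring)
          have hpt : (1 - τ) • xs + τ • x = xs + τ • v := by
            rw [hv, smul_sub, sub_smul, one_smul]
            abel
          rwa [hpt, smul_eq_mul, smul_eq_mul] at hcomb
        have hminτ := hmin _ hcmem
        have hti : (0:ℝ) < t⁻¹ := inv_pos.2 ht
        have hphi : -(t⁻¹ * (g x - g xs)) * τ ≤ φ τ - φ 0 := by
          rw [hφ0]
          show -(t⁻¹ * (g x - g xs)) * τ ≤ f (xs + τ • v) - f xs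
          nlinarith [mul_le_mul_of_nonneg_left hgc hti.le]
        rw [slope_def_field, sub_zero, le_div_iff₀ hτ.1]
        exact hphi
      have := ge_of_tendsto hslope hev
      linarith
    rw [hφ1, hφ0] at hcore
    linarith
end

section
/- Let H be an n×n real symmetric positive definite matrix, t > 0, and g : ℝⁿ → ℝ ∪ {+∞} proper, lower semicontinuous and convex. For s ∈ ℝⁿ define ψ_s(y) := t⁻¹g(y) + ½yᵀHy − sᵀy. If u, v ∈ ℝⁿ and p, q ∈ ℝⁿ are minimizers over ℝⁿ of ψ_u and ψ_v respectively, then (p − q)ᵀ(u − v) ≥ (p − q)ᵀH(p − q) (co-coercivity of the scaled proximal operator P^g_x(·;t) with respect to the local norms). -/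
open Matrix

lemma bil_symm {n : ℕ} (H : Matrix (Fin n) (Fin n) ℝ) (hsymm : H.IsSymm)
    (a b : Fin n → ℝ) : a ⬝ᵥ H.mulVec b = b ⬝ᵥ H.mulVec a := by
  rw [dotProduct_mulVec, ← Matrix.mulVec_transpose, hsymm.eq, dotProduct_comm]

lemma strong_min {n : ℕ} (H : Matrix (Fin n) (Fin n) ℝ)
    (hsymm : H.IsSymm) (hpsd : H.PosSemidef)
    (t : ℝ) (ht : 0 < t) (g : (Fin n → ℝ) → ℝ) (dg : Set (Fin n → ℝ))
    (hg_cvx : ConvexOn ℝ dg g)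
    (u p : Fin n → ℝ) (hp_mem : p ∈ dg)
    (hp_min : ∀ y ∈ dg,
      t⁻¹ * g p + (1/2) * (p ⬝ᵥ H.mulVec p) - u ⬝ᵥ p ≤
        t⁻¹ * g y + (1/2) * (y ⬝ᵥ H.mulVec y) - u ⬝ᵥ y)
    (y : Fin n → ℝ) (hy : y ∈ dg) :
    t⁻¹ * g p + (1/2) * (p ⬝ᵥ H.mulVec p) - u ⬝ᵥ p
      + (1/2) * ((y - p) ⬝ᵥ H.mulVec (y - p))
      ≤ t⁻¹ * g y + (1/2) * (y ⬝ᵥ H.mulVec y) - u ⬝ᵥ y := by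
  set Q := (y - p) ⬝ᵥ H.mulVec (y - p) with hQ
  have hQ0 : 0 ≤ Q := by simpa only [star_trivial] using hpsd.dotProduct_mulVec_nonneg (y - p)
  have key : ∀ l : ℝ, 0 < l → l ≤ 1 →
      t⁻¹ * g p + (1/2) * (p ⬝ᵥ H.mulVec p) - u ⬝ᵥ p + (1/2) * Q
        ≤ t⁻¹ * g y + (1/2) * (y ⬝ᵥ H.mulVec y) - u ⬝ᵥ y + (l/2) * Q := by
    intro l hl0 hl1
    set z : Fin n → ℝ := (1 - l) • p + l • y with hz
    have hzmem : z ∈ dg := hg_cvx.1 hp_mem hy (by linarith) (le_of_lt hl0) (by ring)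
    have hgz : g z ≤ (1 - l) * g p + l * g y :=
      hg_cvx.2 hp_mem hy (by linarith) (le_of_lt hl0) (by ring)
    -- bilinear expansions
    have hsym' := bil_symm H hsymm
    have hzz : z ⬝ᵥ H.mulVec z
        = (1-l)^2 * (p ⬝ᵥ H.mulVec p) + 2*(1-l)*l * (p ⬝ᵥ H.mulVec y)
          + l^2 * (y ⬝ᵥ H.mulVec y) := by
      simp only [hz, Matrix.mulVec_add, Matrix.mulVec_smul, dotProduct_add,
        add_dotProduct, smul_dotProduct, dotProduct_smul, smul_eq_mul]
      rw [hsym' y p]; ring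
    have hQexp : Q = y ⬝ᵥ H.mulVec y - 2 * (p ⬝ᵥ H.mulVec y) + p ⬝ᵥ H.mulVec p := by
      simp only [hQ, Matrix.mulVec_sub, dotProduct_sub, sub_dotProduct]
      rw [hsym' y p]; ring
    have huz : u ⬝ᵥ z = (1-l) * (u ⬝ᵥ p) + l * (u ⬝ᵥ y) := by
      simp only [hz, dotProduct_add, dotProduct_smul, smul_eq_mul]
    have hmin := hp_min z hzmem
    have hcase : t⁻¹ * g z ≤ t⁻¹ * ((1 - l) * g p + l * g y) :=
      mul_le_mul_of_nonneg_left hgz (by positivity)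
    nlinarith [hmin, hzz, hQexp, huz]
  -- ε-limit
  have := le_of_forall_pos_le_add (a := t⁻¹ * g p + (1/2) * (p ⬝ᵥ H.mulVec p) - u ⬝ᵥ p + (1/2) * Q)
    (b := t⁻¹ * g y + (1/2) * (y ⬝ᵥ H.mulVec y) - u ⬝ᵥ y) ?_
  · exact this
  · intro ε hε
    have hQ1 : (0:ℝ) < Q + 1 := by linarith
    set l : ℝ := min 1 (ε / (Q + 1)) with hl
    have hl0 : 0 < l := lt_min one_pos (div_pos hε hQ1)
    have hl1 : l ≤ 1 := min_le_left _ _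
    have h := key l hl0 hl1
    have : (l/2) * Q ≤ ε := by
      have hle : l ≤ ε / (Q + 1) := min_le_right _ _
      have : l * Q ≤ (ε / (Q+1)) * (Q+1) := by nlinarith
      rw [div_mul_cancel₀ _ (ne_of_gt hQ1)] at this
      linarith
    linarith

/-- co-coercivity of the scaled proximal operator. If `p` and `q` minimize
`ψ_u(y) = t⁻¹ g(y) + ½ yᵀHy − uᵀy` and `ψ_v` respectively (`g` proper lsc convex, so the
minimization over `ℝⁿ` is minimization over `dom g`), then
`(p − q)ᵀ(u − v) ≥ (p − q)ᵀ H (p − q)`. -/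
theorem stmt1 {n : ℕ} (H : Matrix (Fin n) (Fin n) ℝ)
    (hsymm : H.IsSymm) (hpd : H.PosDef)
    (t : ℝ) (ht : 0 < t)
    (g : (Fin n → ℝ) → ℝ) (dg : Set (Fin n → ℝ))
    (hg_cvx : ConvexOn ℝ dg g) (hg_lsc : LowerSemicontinuousOn g dg)
    (hg_proper : dg.Nonempty)
    (u v p q : Fin n → ℝ)
    (hp_mem : p ∈ dg)
    (hp_min : ∀ y ∈ dg,
      t⁻¹ * g p + (1/2) * (p ⬝ᵥ H.mulVec p) - u ⬝ᵥ p ≤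
        t⁻¹ * g y + (1/2) * (y ⬝ᵥ H.mulVec y) - u ⬝ᵥ y)
    (hq_mem : q ∈ dg)
    (hq_min : ∀ y ∈ dg,
      t⁻¹ * g q + (1/2) * (q ⬝ᵥ H.mulVec q) - v ⬝ᵥ q ≤
        t⁻¹ * g y + (1/2) * (y ⬝ᵥ H.mulVec y) - v ⬝ᵥ y) :
    (p - q) ⬝ᵥ H.mulVec (p - q) ≤ (p - q) ⬝ᵥ (u - v) := by
  have h1 := strong_min H hsymm hpd.posSemidef t ht g dg hg_cvx u p hp_mem hp_min q hq_mem
  have h2 := strong_min H hsymm hpd.posSemidef t ht g dg hg_cvx v q hq_mem hq_min p hp_mem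
  have hflip : (q - p) ⬝ᵥ H.mulVec (q - p) = (p - q) ⬝ᵥ H.mulVec (p - q) := by
    have : q - p = -(p - q) := by ring
    rw [this, Matrix.mulVec_neg, dotProduct_neg, neg_dotProduct, neg_neg]
  rw [hflip] at h1
  have hexp : (p - q) ⬝ᵥ (u - v)
      = u ⬝ᵥ p - u ⬝ᵥ q - (v ⬝ᵥ p - v ⬝ᵥ q) := by
    simp only [dotProduct_sub, sub_dotProduct]
    rw [dotProduct_comm p u, dotProduct_comm q u, dotProduct_comm p v, dotProduct_comm q v]

  rw [hexp]
  linarith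
end

section
/- Let H be an n×n real symmetric positive definite matrix, t > 0, and g : ℝⁿ → ℝ ∪ {+∞} proper, lower semicontinuous and convex. For s ∈ ℝⁿ define ψ_s(y) := t⁻¹g(y) + ½yᵀHy − sᵀy. If u, v ∈ ℝⁿ and p, q ∈ ℝⁿ are minimizers over ℝⁿ of ψ_u and ψ_v respectively, then ((p − q)ᵀH(p − q))^(1/2) ≤ ((u − v)ᵀH⁻¹(u − v))^(1/2), i.e., the scaled proximal operator P^g_x(·;t) is nonexpansive from the dual local norm into the local norm. -/
open Matrix

lemma bsym {n : ℕ} {H : Matrix (Fin n) (Fin n) ℝ} (hs : H.IsSymm) (x y : Fin n → ℝ) :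
    x ⬝ᵥ H.mulVec y = y ⬝ᵥ H.mulVec x := by
  rw [Matrix.dotProduct_mulVec, dotProduct_comm, ← Matrix.mulVec_transpose, hs.eq]

lemma bexpand {n : ℕ} {H : Matrix (Fin n) (Fin n) ℝ} (hs : H.IsSymm)
    (x z : Fin n → ℝ) (l : ℝ) :
    (x + l • z) ⬝ᵥ H.mulVec (x + l • z)
      = x ⬝ᵥ H.mulVec x + 2 * l * (x ⬝ᵥ H.mulVec z) + l * l * (z ⬝ᵥ H.mulVec z) := by
  rw [Matrix.mulVec_add, Matrix.mulVec_smul, dotProduct_add, add_dotProduct,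
    add_dotProduct, smul_dotProduct, bsym hs z x]
  simp only [dotProduct_smul, smul_dotProduct, smul_eq_mul]
  ring

lemma key {n : ℕ} {H : Matrix (Fin n) (Fin n) ℝ} (hsymm : H.IsSymm) (hpd : H.PosDef)
    {t : ℝ} (ht : 0 < t) {g : (Fin n → ℝ) → ℝ} {dg : Set (Fin n → ℝ)}
    (hg : ConvexOn ℝ dg g)
    {s p : Fin n → ℝ} (hp : p ∈ dg)
    (hmin : ∀ y ∈ dg,
      t⁻¹ * g p + (1/2) * (p ⬝ᵥ H.mulVec p) - s ⬝ᵥ p ≤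
        t⁻¹ * g y + (1/2) * (y ⬝ᵥ H.mulVec y) - s ⬝ᵥ y)
    {y : Fin n → ℝ} (hy : y ∈ dg) :
    t⁻¹ * g p + s ⬝ᵥ (y - p) ≤ t⁻¹ * g y + p ⬝ᵥ H.mulVec (y - p) := by
  set d : Fin n → ℝ := y - p with hd
  have hc0 : 0 ≤ d ⬝ᵥ H.mulVec d := by
    simpa using hpd.posSemidef.dotProduct_mulVec_nonneg d
  have step : ∀ l : ℝ, 0 < l → l ≤ 1 →
      t⁻¹ * g p + s ⬝ᵥ d ≤ t⁻¹ * g y + p ⬝ᵥ H.mulVec d + l * ((1/2) * (d ⬝ᵥ H.mulVec d)) := by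
    intro l hl0 hl1
    set z : Fin n → ℝ := p + l • d with hz
    have hzc : z = (1 - l) • p + l • y := by
      rw [hz, hd]; module
    have hz_mem : z ∈ dg := by
      rw [hzc]
      exact hg.1 hp hy (by linarith) (le_of_lt hl0) (by ring)
    have hgz : g z ≤ (1 - l) * g p + l * g y := by
      rw [hzc]
      simpa using hg.2 hp hy (by linarith) (le_of_lt hl0) (by ring)
    have hmz := hmin z hz_mem
    have hexp : z ⬝ᵥ H.mulVec z
        = p ⬝ᵥ H.mulVec p + 2 * l * (p ⬝ᵥ H.mulVec d) + l * l * (d ⬝ᵥ H.mulVec d) := by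
      rw [hz]; exact bexpand hsymm p d l
    have hsz : s ⬝ᵥ z = s ⬝ᵥ p + l * (s ⬝ᵥ d) := by
      rw [hz, dotProduct_add, dotProduct_smul, smul_eq_mul]
    have htinv : 0 < t⁻¹ := inv_pos.mpr ht
    have hgz' : t⁻¹ * g z ≤ t⁻¹ * ((1 - l) * g p + l * g y) :=
      mul_le_mul_of_nonneg_left hgz (le_of_lt htinv)
    rw [hexp, hsz] at hmz
    have hl : l * (t⁻¹ * g p + s ⬝ᵥ d) ≤
        l * (t⁻¹ * g y + p ⬝ᵥ H.mulVec d + l * ((1/2) * (d ⬝ᵥ H.mulVec d))) := by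
      nlinarith [hmz, hgz']
    exact (mul_le_mul_iff_right₀ hl0).mp hl
  refine le_of_forall_pos_le_add ?_
  intro ε hε
  rcases eq_or_lt_of_le hc0 with hc | hc
  · have := step 1 one_pos le_rfl
    rw [← hc] at this
    linarith
  · set c := (1/2) * (d ⬝ᵥ H.mulVec d) with hcdef
    have hcpos : 0 < c := by rw [hcdef]; positivity
    have hl0 : 0 < min 1 (ε / c) := lt_min one_pos (div_pos hε hcpos)
    have := step (min 1 (ε / c)) hl0 (min_le_left _ _)
    have hle : min 1 (ε / c) * c ≤ ε := by
      calc min 1 (ε / c) * c ≤ (ε / c) * c :=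
            mul_le_mul_of_nonneg_right (min_le_right _ _) (le_of_lt hcpos)
        _ = ε := by field_simp
    linarith

/-- nonexpansiveness of the scaled proximal operator from the dual local norm
into the local norm: `‖p − q‖_H ≤ ‖u − v‖_H*`, i.e.
`((p−q)ᵀH(p−q))^(1/2) ≤ ((u−v)ᵀH⁻¹(u−v))^(1/2)`. -/
theorem stmt2 {n : ℕ} (H : Matrix (Fin n) (Fin n) ℝ)
    (hsymm : H.IsSymm) (hpd : H.PosDef)
    (t : ℝ) (ht : 0 < t)
    (g : (Fin n → ℝ) → ℝ) (dg : Set (Fin n → ℝ))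
    (hg_cvx : ConvexOn ℝ dg g) (hg_lsc : LowerSemicontinuousOn g dg)
    (hg_proper : dg.Nonempty)
    (u v p q : Fin n → ℝ)
    (hp_mem : p ∈ dg)
    (hp_min : ∀ y ∈ dg,
      t⁻¹ * g p + (1/2) * (p ⬝ᵥ H.mulVec p) - u ⬝ᵥ p ≤
        t⁻¹ * g y + (1/2) * (y ⬝ᵥ H.mulVec y) - u ⬝ᵥ y)
    (hq_mem : q ∈ dg)
    (hq_min : ∀ y ∈ dg,
      t⁻¹ * g q + (1/2) * (q ⬝ᵥ H.mulVec q) - v ⬝ᵥ q ≤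
        t⁻¹ * g y + (1/2) * (y ⬝ᵥ H.mulVec y) - v ⬝ᵥ y) :
    Real.sqrt ((p - q) ⬝ᵥ H.mulVec (p - q)) ≤
      Real.sqrt ((u - v) ⬝ᵥ H⁻¹.mulVec (u - v)) := by
  have h1 := key hsymm hpd ht hg_cvx hp_mem hp_min hq_mem
  have h2 := key hsymm hpd ht hg_cvx hq_mem hq_min hp_mem
  set d : Fin n → ℝ := p - q with hddef
  set w : Fin n → ℝ := u - v with hwdef
  -- firm nonexpansiveness: dᵀHd ≤ w·d
  have hfirm : d ⬝ᵥ H.mulVec d ≤ w ⬝ᵥ d := by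
    have e1 : u ⬝ᵥ (q - p) = -(u ⬝ᵥ d) := by
      rw [hddef, dotProduct_sub, dotProduct_sub]; ring
    have e3 : d ⬝ᵥ H.mulVec d =
        p ⬝ᵥ H.mulVec p - 2 * (p ⬝ᵥ H.mulVec q) + q ⬝ᵥ H.mulVec q := by
      rw [hddef, Matrix.mulVec_sub, sub_dotProduct, dotProduct_sub, dotProduct_sub,
        bsym hsymm q p]
      ring
    have e4 : p ⬝ᵥ H.mulVec (q - p) = p ⬝ᵥ H.mulVec q - p ⬝ᵥ H.mulVec p := by
      rw [Matrix.mulVec_sub, dotProduct_sub]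
    have e5 : q ⬝ᵥ H.mulVec d = p ⬝ᵥ H.mulVec q - q ⬝ᵥ H.mulVec q := by
      rw [hddef, Matrix.mulVec_sub, dotProduct_sub, bsym hsymm q p]
    have hw : w ⬝ᵥ d = u ⬝ᵥ d - v ⬝ᵥ d := by
      rw [hwdef, sub_dotProduct]
    rw [e1] at h1
    rw [e5] at h2
    rw [e4] at h1
    rw [e3, hw]
    linarith
  -- Cauchy-Schwarz via discriminant
  have hunit : IsUnit H.det := isUnit_iff_ne_zero.mpr (ne_of_gt hpd.det_pos)
  set b : Fin n → ℝ := H⁻¹.mulVec w with hbdef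
  have hHb : H.mulVec b = w := by
    rw [hbdef, Matrix.mulVec_mulVec, Matrix.mul_nonsing_inv H hunit, Matrix.one_mulVec]
  have hdHb : d ⬝ᵥ H.mulVec b = w ⬝ᵥ d := by
    rw [hHb, dotProduct_comm]
  have hbHb : b ⬝ᵥ H.mulVec b = w ⬝ᵥ H⁻¹.mulVec w := by
    rw [hHb, hbdef, dotProduct_comm]
  have hquad : ∀ l : ℝ,
      0 ≤ (w ⬝ᵥ H⁻¹.mulVec w) * (l * l) + (2 * (w ⬝ᵥ d)) * l + d ⬝ᵥ H.mulVec d := by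
    intro l
    have h0 : 0 ≤ (d + l • b) ⬝ᵥ H.mulVec (d + l • b) := by
      simpa using hpd.posSemidef.dotProduct_mulVec_nonneg (d + l • b)
    rw [bexpand hsymm d b l, hdHb, hbHb] at h0
    linarith
  have hdisc := discrim_le_zero hquad
  rw [discrim] at hdisc
  have hA : 0 ≤ d ⬝ᵥ H.mulVec d := by simpa using hpd.posSemidef.dotProduct_mulVec_nonneg d
  have hC : 0 ≤ w ⬝ᵥ H⁻¹.mulVec w := by simpa using hpd.inv.posSemidef.dotProduct_mulVec_nonneg w
  have hAC : d ⬝ᵥ H.mulVec d ≤ w ⬝ᵥ H⁻¹.mulVec w := by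
    rcases eq_or_lt_of_le hA with h | h
    · linarith
    · nlinarith [hfirm, hdisc]
  exact Real.sqrt_le_sqrt hAC
end

section
/- Let f : ℝⁿ → ℝ ∪ {+∞} be twice continuously differentiable on its open effective domain, g : ℝⁿ → ℝ ∪ {+∞} proper, lower semicontinuous and convex, and t > 0. Suppose x*_t ∈ dom f ∩ dom g minimizes F(x;t) := f(x) + t⁻¹g(x) over ℝⁿ and H := ∇²f(x*_t) is positive definite. Then x*_t is the unique minimizer over ℝⁿ of y ↦ t⁻¹g(y) + ½yᵀHy − (Hx*_t − ∇f(x*_t))ᵀy; that is, x*_t = P^g_{x*_t}(S_{x*_t}(x*_t); t), the fixed-point characterization of the minimizer. -/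
open RealInnerProductSpace

/-- fixed-point characterization of the minimizer: if `x*_t ∈ dom f ∩ dom g`
minimizes `F(·;t) = f + t⁻¹ g` and `H = ∇²f(x*_t)` is positive definite, then `x*_t` is the
unique minimizer (over `ℝⁿ`, i.e. over `dom g`) of
`y ↦ t⁻¹ g(y) + ½ ⟪y, H y⟫ − ⟪H x*_t − ∇f(x*_t), y⟫`, that is,
`x*_t = P^g_{x*_t}(S_{x*_t}(x*_t); t)`. -/
theorem stmt3 {n : ℕ} (f g : EuclideanSpace ℝ (Fin n) → ℝ)
    (df dg : Set (EuclideanSpace ℝ (Fin n)))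
    (hdf_open : IsOpen df)
    (hf_smooth : ContDiffOn ℝ 2 f df)
    (hg_cvx : ConvexOn ℝ dg g) (hg_lsc : LowerSemicontinuousOn g dg)
    (hg_proper : dg.Nonempty)
    (t : ℝ) (ht : 0 < t)
    (xs : EuclideanSpace ℝ (Fin n)) (hxs : xs ∈ df ∩ dg)
    (hmin : ∀ x ∈ df ∩ dg, f xs + t⁻¹ * g xs ≤ f x + t⁻¹ * g x)
    (H : EuclideanSpace ℝ (Fin n) →L[ℝ] EuclideanSpace ℝ (Fin n))
    (hH : HasFDerivAt (fun y => gradient f y) H xs)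
    (hpd : ∀ u : EuclideanSpace ℝ (Fin n), u ≠ 0 → 0 < ⟪u, H u⟫) :
    xs ∈ dg ∧ ∀ y ∈ dg, y ≠ xs →
      t⁻¹ * g xs + (1/2) * ⟪xs, H xs⟫ - ⟪H xs - gradient f xs, xs⟫ <
        t⁻¹ * g y + (1/2) * ⟪y, H y⟫ - ⟪H xs - gradient f xs, y⟫ := by
  classical
  obtain ⟨hxdf, hxdg⟩ := hxs
  -- f is differentiable on df
  have hdiff : ∀ z ∈ df, DifferentiableAt ℝ f z := by
    intro z hz
    exact (hf_smooth.contDiffAt (hdf_open.mem_nhds hz)).differentiableAt (by norm_num)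
  -- symmetry of H
  have hsymm : ∀ v w : EuclideanSpace ℝ (Fin n), ⟪H v, w⟫ = ⟪H w, v⟫ := by
    have hev : ∀ᶠ y in nhds xs, HasFDerivAt f
        ((fun z => InnerProductSpace.toDual ℝ (EuclideanSpace ℝ (Fin n)) (gradient f z)) y) y := by
      filter_upwards [hdf_open.mem_nhds hxdf] with z hz
      exact ((hdiff z hz).hasGradientAt).hasFDerivAt
    have hcomp : HasFDerivAt
        (fun z => InnerProductSpace.toDual ℝ (EuclideanSpace ℝ (Fin n)) (gradient f z))
        (((InnerProductSpace.toDual ℝ (EuclideanSpace ℝ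
            (Fin n))).toContinuousLinearEquiv.toContinuousLinearMap).comp H) xs :=
      ((InnerProductSpace.toDual ℝ (EuclideanSpace ℝ
        (Fin n))).toContinuousLinearEquiv.toContinuousLinearMap).hasFDerivAt.comp xs hH
    intro v w
    have := second_derivative_symmetric_of_eventually hev hcomp v w
    simpa [InnerProductSpace.toDual_apply_apply] using this
  refine ⟨hxdg, fun y hy hne => ?_⟩
  set v : EuclideanSpace ℝ (Fin n) := y - xs with hv
  have hvne : v ≠ 0 := sub_ne_zero.mpr hne
  -- first order optimality : t⁻¹ * (g xs - g y) ≤ ⟪gradient f xs, v⟫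
  have hfo : t⁻¹ * (g xs - g y) ≤ ⟪gradient f xs, v⟫ := by
    -- derivative of φ s = f (xs + s • v) at 0
    have hline : HasDerivAt (fun s : ℝ => xs + s • v) v 0 := by
      simpa using ((hasDerivAt_id (0:ℝ)).smul_const v).const_add xs
    have hderiv : HasDerivAt (fun s : ℝ => f (xs + s • v)) ⟪gradient f xs, v⟫ 0 := by
      have hf' : HasFDerivAt f
          (InnerProductSpace.toDual ℝ (EuclideanSpace ℝ (Fin n)) (gradient f xs)) xs :=
        ((hdiff xs hxdf).hasGradientAt).hasFDerivAt
      have h0 : xs + (0:ℝ) • v = xs := by simp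
      have hf'' : HasFDerivAt f
          (InnerProductSpace.toDual ℝ (EuclideanSpace ℝ (Fin n)) (gradient f xs))
          (xs + (0:ℝ) • v) := by rw [h0]; exact hf'
      have := hf''.comp_hasDerivAt (x := (0:ℝ)) hline
      simpa [InnerProductSpace.toDual_apply_apply, Function.comp_def] using this
    have htend : Filter.Tendsto (slope (fun s : ℝ => f (xs + s • v)) 0)
        (nhdsWithin 0 (Set.Ioi 0)) (nhds ⟪gradient f xs, v⟫) :=
      (hasDerivAt_iff_tendsto_slope.1 hderiv).mono_left
        (nhdsWithin_mono 0 (fun s hs => ne_of_gt hs))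
    refine ge_of_tendsto htend ?_
    -- eventually the slope is ≥ c
    have hmem : ∀ᶠ s : ℝ in nhdsWithin 0 (Set.Ioi 0), xs + s • v ∈ df := by
      have hcont : Filter.Tendsto (fun s : ℝ => xs + s • v) (nhds 0) (nhds xs) := by
        have := hline.continuousAt.tendsto
        simpa using this
      exact nhdsWithin_le_nhds (hcont.eventually_mem (hdf_open.mem_nhds hxdf))
    have hsmall : ∀ᶠ s : ℝ in nhdsWithin 0 (Set.Ioi 0), s ≤ 1 := by
      have : ∀ᶠ s : ℝ in nhds 0, s ≤ 1 := by
        filter_upwards [Metric.ball_mem_nhds (0:ℝ) one_pos] with s hs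
        rw [Metric.mem_ball, Real.dist_eq] at hs
        cases abs_lt.1 hs; linarith
      exact nhdsWithin_le_nhds this
    filter_upwards [hmem, hsmall, self_mem_nhdsWithin] with s hsdf hs1 hspos
    have hspos' : (0:ℝ) < s := hspos
    -- convex combination in dg
    have hz : xs + s • v = (1 - s) • xs + s • y := by
      rw [hv]; module
    have hzdg : xs + s • v ∈ dg := by
      rw [hz]
      exact hg_cvx.1 hxdg hy (by linarith) (le_of_lt hspos') (by ring)
    have hgz : g (xs + s • v) ≤ (1 - s) * g xs + s * g y := by
      rw [hz]
      exact hg_cvx.2 hxdg hy (by linarith : (0:ℝ) ≤ 1 - s)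
        (le_of_lt hspos') (by ring : (1 - s) + s = 1)
    have hm := hmin (xs + s • v) ⟨hsdf, hzdg⟩
    have hti : (0:ℝ) < t⁻¹ := inv_pos.mpr ht
    have hmul : t⁻¹ * g (xs + s • v) ≤ t⁻¹ * ((1 - s) * g xs + s * g y) :=
      mul_le_mul_of_nonneg_left hgz (le_of_lt hti)
    have expand : t⁻¹ * ((1 - s) * g xs + s * g y)
        = t⁻¹ * g xs - s * (t⁻¹ * (g xs - g y)) := by ring
    have key : s * (t⁻¹ * (g xs - g y)) ≤ f (xs + s • v) - f xs := by
      rw [expand] at hmul; linarith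
    have hslope : slope (fun s : ℝ => f (xs + s • v)) 0 s
        = (f (xs + s • v) - f xs) / s := by
      rw [slope_def_field]; simp
    rw [hslope, le_div_iff₀ hspos']
    nlinarith [key]
  -- quadratic part
  have hq : 0 < ⟪v, H v⟫ := hpd v hvne
  -- algebraic identity
  have hyv : y = xs + v := by rw [hv]; abel
  have e1 : ⟪y, H y⟫ = ⟪xs, H xs⟫ + ⟪xs, H v⟫ + ⟪v, H xs⟫ + ⟪v, H v⟫ := by
    rw [hyv, map_add, inner_add_left, inner_add_right, inner_add_right]; ring
  have e2 : ⟪xs, H v⟫ = ⟪v, H xs⟫ := by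
    rw [real_inner_comm (H v) xs, real_inner_comm (H xs) v]
    exact hsymm v xs
  have e3 : ⟪H xs - gradient f xs, y⟫
      = ⟪H xs, xs⟫ + ⟪H xs, v⟫ - ⟪gradient f xs, xs⟫ - ⟪gradient f xs, v⟫ := by
    rw [hyv, inner_sub_left, inner_add_right, inner_add_right]; ring
  have e4 : ⟪H xs - gradient f xs, xs⟫ = ⟪H xs, xs⟫ - ⟪gradient f xs, xs⟫ := by
    rw [inner_sub_left]
  have e5 : ⟪H xs, xs⟫ = ⟪xs, H xs⟫ := real_inner_comm _ _
  have e6 : ⟪H xs, v⟫ = ⟪v, H xs⟫ := real_inner_comm _ _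
  have hid : t⁻¹ * g y + (1/2) * ⟪y, H y⟫ - ⟪H xs - gradient f xs, y⟫
      - (t⁻¹ * g xs + (1/2) * ⟪xs, H xs⟫ - ⟪H xs - gradient f xs, xs⟫)
      = t⁻¹ * (g y - g xs) + ⟪gradient f xs, v⟫ + (1/2) * ⟪v, H v⟫ := by
    rw [e1, e3, e4, e2, e5, e6]; ring
  have hpos : 0 < t⁻¹ * (g y - g xs) + ⟪gradient f xs, v⟫ + (1/2) * ⟪v, H v⟫ := by
    nlinarith [hfo, hq]
  linarith [hid, hpos]
end

section
/- Let c > 0 and set C := 1.177c + 6.068. Let (λ_j)_{j≥0} be a sequence of nonnegative real numbers with λ₀ ≤ min{0.15, 1/C} and λ_{j+1} ≤ (c/(1 − λ_j) + 6.068)·λ_j² for all j ≥ 0. Then for all j ≥ 0: λ_j ≤ λ₀ and λ_{j+1} ≤ C·λ_j²; consequently C·λ_j ≤ (C·λ₀)^(2^j) for all j ≥ 0, i.e., the sequence (λ_j) converges to zero at a quadratic rate. -/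
/-- quadratic convergence of the inexact proximal-Newton iteration with
`δ_j ≤ c λ_j²`: with `C = 1.177c + 6.068`, if `λ₀ ≤ min{0.15, 1/C}` and
`λ_{j+1} ≤ (c/(1 − λ_j) + 6.068)·λ_j²`, then for every `j`,
`λ_j ≤ λ₀`, `λ_{j+1} ≤ C·λ_j²`, and `C·λ_j ≤ (C·λ₀)^(2^j)`. -/
theorem stmt8 (c : ℝ) (hc : 0 < c) (lam : ℕ → ℝ) (hnn : ∀ j, 0 ≤ lam j)
    (h0 : lam 0 ≤ min 0.15 (1 / (1.177 * c + 6.068)))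
    (hrec : ∀ j, lam (j + 1) ≤ (c / (1 - lam j) + 6.068) * (lam j) ^ 2) :
    ∀ j, lam j ≤ lam 0 ∧
      lam (j + 1) ≤ (1.177 * c + 6.068) * (lam j) ^ 2 ∧
      (1.177 * c + 6.068) * lam j ≤ ((1.177 * c + 6.068) * lam 0) ^ (2 ^ j) := by
  have hCpos : (0:ℝ) < 1.177 * c + 6.068 := by positivity
  have h015 : lam 0 ≤ 0.15 := le_trans h0 (min_le_left _ _)
  have hC0 : (1.177 * c + 6.068) * lam 0 ≤ 1 := by
    have h := le_trans h0 (min_le_right _ _)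
    rw [le_div_iff₀ hCpos] at h
    linarith
  have step : ∀ j, lam j ≤ 0.15 →
      lam (j + 1) ≤ (1.177 * c + 6.068) * lam j ^ 2 := by
    intro j hlj
    have hfrac : c / (1 - lam j) ≤ 1.177 * c := by
      rw [div_le_iff₀ (by linarith)]
      nlinarith [hnn j]
    calc lam (j+1) ≤ (c / (1 - lam j) + 6.068) * lam j ^ 2 := hrec j
      _ ≤ (1.177 * c + 6.068) * lam j ^ 2 := by nlinarith [sq_nonneg (lam j)]
  have key : ∀ j, lam j ≤ lam 0 ∧
      (1.177 * c + 6.068) * lam j ≤ ((1.177 * c + 6.068) * lam 0) ^ (2 ^ j) := by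
    intro j
    induction j with
    | zero => exact ⟨le_refl _, by simp⟩
    | succ j ih =>
      obtain ⟨h1, h2⟩ := ih
      have hlj : lam j ≤ 0.15 := h1.trans h015
      have hstep := step j hlj
      have hCl1 : (1.177 * c + 6.068) * lam j ≤ 1 := by
        calc (1.177 * c + 6.068) * lam j ≤ ((1.177 * c + 6.068) * lam 0) ^ (2 ^ j) := h2
          _ ≤ 1 := pow_le_one₀ (mul_nonneg hCpos.le (hnn 0)) hC0
      refine ⟨?_, ?_⟩
      · nlinarith [hnn j]
      · have h3 : (1.177 * c + 6.068) * lam (j+1) ≤ ((1.177 * c + 6.068) * lam j) ^ 2 := by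
          nlinarith
        calc (1.177 * c + 6.068) * lam (j+1) ≤ ((1.177 * c + 6.068) * lam j) ^ 2 := h3
          _ ≤ (((1.177 * c + 6.068) * lam 0) ^ (2 ^ j)) ^ 2 := by
              exact pow_le_pow_left₀ (mul_nonneg hCpos.le (hnn j)) h2 2
          _ = ((1.177 * c + 6.068) * lam 0) ^ (2 ^ (j+1)) := by
              rw [← pow_mul, pow_succ]
  intro j
  obtain ⟨h1, h2⟩ := key j
  exact ⟨h1, step j (h1.trans h015), h2⟩
end

section
/- Let β ∈ (0, 0.15] and let δ, Δ, λ⁺, μ, μ⁺ be nonnegative real numbers satisfying δ ≤ 0.075β, Δ ≤ (√β − 2.581β)/(2.581 + √β), λ⁺ ≤ β, μ ≤ (λ⁺ + Δ)/(1 − Δ), and μ⁺ ≤ 1.18δ + 6.07μ². Then μ ≤ √β/2.581 and μ⁺ ≤ β. -/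
/-- quantitative core of Theorem 4.1: for `β ∈ (0, 0.15]`, if
`δ ≤ 0.075β`, `Δ ≤ (√β − 2.581β)/(2.581 + √β)`, `λ⁺ ≤ β`, `μ ≤ (λ⁺ + Δ)/(1 − Δ)` and
`μ⁺ ≤ 1.18δ + 6.07μ²`, then `μ ≤ √β/2.581` and `μ⁺ ≤ β`. -/
theorem stmt10 (β δ Δ lamp μ μp : ℝ)
    (hβ : β ∈ Set.Ioc (0 : ℝ) 0.15)
    (hδ0 : 0 ≤ δ) (hΔ0 : 0 ≤ Δ) (hlamp0 : 0 ≤ lamp) (hμ0 : 0 ≤ μ) (hμp0 : 0 ≤ μp)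
    (hδ : δ ≤ 0.075 * β)
    (hΔ : Δ ≤ (Real.sqrt β - 2.581 * β) / (2.581 + Real.sqrt β))
    (hlamp : lamp ≤ β)
    (hμ : μ ≤ (lamp + Δ) / (1 - Δ))
    (hμp : μp ≤ 1.18 * δ + 6.07 * μ ^ 2) :
    μ ≤ Real.sqrt β / 2.581 ∧ μp ≤ β := by
  obtain ⟨hβ0, hβ1⟩ := hβ
  set s := Real.sqrt β with hs
  have hs0 : 0 ≤ s := Real.sqrt_nonneg β
  have hs2 : s * s = β := Real.mul_self_sqrt hβ0.le
  have hsu : s ≤ 0.3873 := by nlinarith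
  have hden : (0:ℝ) < 2.581 + s := by linarith
  have hΔ' : Δ * (2.581 + s) ≤ s - 2.581 * β := by
    have := (le_div_iff₀ hden).mp hΔ
    linarith
  have hΔ1 : Δ < 1 := by nlinarith
  have h1Δ : (0:ℝ) < 1 - Δ := by linarith
  have hμ' : μ * (1 - Δ) ≤ lamp + Δ := (le_div_iff₀ h1Δ).mp hμ
  have hg1 : μ ≤ s / 2.581 := by
    rw [le_div_iff₀ (by norm_num : (0:ℝ) < 2.581)]
    nlinarith [mul_nonneg hμ0 hΔ0]
  refine ⟨hg1, ?_⟩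
  nlinarith [sq_nonneg μ, mul_le_mul hg1 hg1 hμ0 (by positivity : (0:ℝ) ≤ s / 2.581)]
end

section
/- Let f : ℝⁿ → ℝ ∪ {+∞} be a standard self-concordant ν-self-concordant barrier (ν > 0) on its open convex effective domain, with ∇²f(x) positive definite for all x ∈ dom f, and let g : ℝⁿ → ℝ ∪ {+∞} be proper, lower semicontinuous and convex. Let t_k, t_{k+1} > 0, d_k := t_{k+1} − t_k, and let x*_{t_k} and x*_{t_{k+1}} be the unique minimizers of F(·; t_k) and F(·; t_{k+1}) respectively, where F(x;t) := f(x) + t⁻¹g(x). Set Δ_k := ‖x*_{t_{k+1}} − x*_{t_k}‖_{x*_{t_{k+1}}} and assume Δ_k < 1. Then Δ_k/(1 + Δ_k) ≤ (|d_k|/t_k)·‖∇f(x*_{t_{k+1}})‖*_{x*_{t_{k+1}}} ≤ (|d_k|/t_k)·√ν. Consequently, if |d_k|·√ν < t_k, then Δ_k ≤ |d_k|√ν/(t_k − |d_k|√ν). -/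
open RealInnerProductSpace

/-- The dual local norm `‖v‖_x* = (vᵀ (∇²f(x))⁻¹ v)^(1/2)`. -/
noncomputable def dualLocNorm {n : ℕ}
    (H : EuclideanSpace ℝ (Fin n) →L[ℝ] EuclideanSpace ℝ (Fin n))
    (v : EuclideanSpace ℝ (Fin n)) : ℝ :=
  Real.sqrt ⟪v, H.inverse v⟫

/-- If `F` has derivative `d` at `0` and `F τ - F 0 ≥ c τ` on `(0,1]`, then `c ≤ d`. -/
lemma auxSlopeGe {F : ℝ → ℝ} {d c : ℝ} (hF : HasDerivAt F d 0)
    (h : ∀ τ ∈ Set.Ioc (0:ℝ) 1, c * τ ≤ F τ - F 0) : c ≤ d := by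
  have hs := hasDerivAt_iff_tendsto_slope.mp hF
  have hs' : Filter.Tendsto (slope F 0) (nhdsWithin 0 (Set.Ioi 0)) (nhds d) :=
    hs.mono_left (nhdsWithin_mono _ (fun x hx => ne_of_gt hx))
  refine ge_of_tendsto hs' ?_
  filter_upwards [Ioc_mem_nhdsGT_of_mem (Set.mem_Ico.mpr ⟨le_refl 0, one_pos⟩)] with τ hτ
  have hτ0 : (0:ℝ) < τ := hτ.1
  have hsl : slope F 0 τ = (F τ - F 0) / τ := by rw [slope_def_field, sub_zero]
  rw [hsl, le_div_iff₀ hτ0]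
  exact h τ hτ

/-- Gronwall-type bound for self-concordant functions along a line. -/
lemma auxGronwall {ψ dψ : ℝ → ℝ} {U : Set ℝ} (hU : IsOpen U) (hsub : Set.Icc (0:ℝ) 1 ⊆ U)
    (hpos : ∀ τ ∈ U, 0 < ψ τ)
    (hder : ∀ τ ∈ U, HasDerivAt ψ (dψ τ) τ)
    (hsc : ∀ τ ∈ U, |dψ τ| ≤ 2 * (ψ τ) ^ ((3:ℝ)/2))
    {Δ : ℝ} (hΔpos : 0 < Δ) (hψ1 : ψ 1 = Δ ^ 2) :
    Δ ^ 2 / (1 + Δ) ≤ ∫ τ in (0:ℝ)..1, ψ τ := by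
  -- the function χ = (√ψ)⁻¹ is 1-Lipschitz on [0,1]
  set χ : ℝ → ℝ := fun τ => (Real.sqrt (ψ τ))⁻¹ with hχ
  set dχ : ℝ → ℝ := fun τ => -(1 / (2 * Real.sqrt (ψ τ)) * dψ τ) / (Real.sqrt (ψ τ)) ^ 2 with hdχ
  have hχder : ∀ τ ∈ U, HasDerivAt χ (dχ τ) τ := by
    intro τ hτ
    have hp := hpos τ hτ
    have hsq : HasDerivAt (fun t => Real.sqrt (ψ t)) (1 / (2 * Real.sqrt (ψ τ)) * dψ τ) τ :=
      (Real.hasDerivAt_sqrt hp.ne').comp τ (hder τ hτ)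
    exact hsq.inv (Real.sqrt_ne_zero'.mpr hp)
  have hthree : ∀ τ ∈ U, (ψ τ) ^ ((3:ℝ)/2) = Real.sqrt (ψ τ) * ψ τ := by
    intro τ hτ
    have hp := hpos τ hτ
    rw [show (3:ℝ)/2 = 1/2 + 1 by norm_num, Real.rpow_add hp, Real.rpow_one,
      ← Real.sqrt_eq_rpow]
  have hbound : ∀ τ ∈ U, |dχ τ| ≤ 1 := by
    intro τ hτ
    have hp := hpos τ hτ
    have hsp : 0 < Real.sqrt (ψ τ) := Real.sqrt_pos.mpr hp
    have hsq2 : (Real.sqrt (ψ τ)) ^ 2 = ψ τ := Real.sq_sqrt hp.le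
    have h1 : |dχ τ| = |dψ τ| / (2 * Real.sqrt (ψ τ) * ψ τ) := by
      rw [hdχ]
      rw [abs_div, abs_neg, abs_mul, abs_of_pos (by positivity : (0:ℝ) < 1 / (2 * Real.sqrt (ψ τ)))]
      rw [abs_of_pos (by positivity : (0:ℝ) < (Real.sqrt (ψ τ))^2), hsq2]
      field_simp
    rw [h1, div_le_one (by positivity)]
    calc |dψ τ| ≤ 2 * (ψ τ) ^ ((3:ℝ)/2) := hsc τ hτ
      _ = 2 * Real.sqrt (ψ τ) * ψ τ := by rw [hthree τ hτ]; ring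
  -- Lipschitz estimate
  have hlip : ∀ τ ∈ Set.Icc (0:ℝ) 1, |χ 1 - χ τ| ≤ 1 - τ := by
    intro τ hτ
    have := Convex.norm_image_sub_le_of_norm_hasDerivWithin_le
      (f := χ) (f' := dχ) (s := Set.Icc (0:ℝ) 1) (C := 1)
      (fun x hx => (hχder x (hsub hx)).hasDerivWithinAt)
      (fun x hx => by simpa using hbound x (hsub hx)) (convex_Icc 0 1)
      hτ (Set.mem_Icc.mpr ⟨zero_le_one, le_refl 1⟩)
    rw [Real.norm_eq_abs, Real.norm_eq_abs, abs_of_nonneg (by linarith [hτ.2] : (0:ℝ) ≤ 1 - τ)]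
      at this
    simpa using this
  -- pointwise lower bound on ψ
  have hlow : ∀ τ ∈ Set.Icc (0:ℝ) 1, Δ^2 / (1 + Δ * (1 - τ))^2 ≤ ψ τ := by
    intro τ hτ
    have hp := hpos τ (hsub hτ)
    have hsp : 0 < Real.sqrt (ψ τ) := Real.sqrt_pos.mpr hp
    have hχ1 : χ 1 = Δ⁻¹ := by
      rw [hχ]; simp only [hψ1]
      rw [Real.sqrt_sq hΔpos.le]
    have h2 : χ τ ≤ Δ⁻¹ + (1 - τ) := by
      have := hlip τ hτ
      have habs := abs_sub_abs_le_abs_sub (χ τ) (χ 1)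
      have := (abs_le.mp ((abs_sub_comm (χ 1) (χ τ)) ▸ this)).2
      rw [hχ1] at this; linarith
    have hden : 0 < 1 + Δ * (1 - τ) := by nlinarith [hτ.1, hτ.2]
    have h3 : Δ⁻¹ + (1 - τ) = (1 + Δ * (1 - τ)) / Δ := by field_simp
    have hA : 0 < Δ⁻¹ + (1 - τ) :=
      add_pos_of_pos_of_nonneg (inv_pos.mpr hΔpos) (by linarith [hτ.2])
    have h4 : Δ / (1 + Δ * (1 - τ)) ≤ Real.sqrt (ψ τ) := by
      have h5 : (Δ⁻¹ + (1 - τ))⁻¹ ≤ Real.sqrt (ψ τ) :=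
        ((inv_le_comm₀ hsp hA).mp h2)
      calc Δ / (1 + Δ * (1 - τ)) = (Δ⁻¹ + (1 - τ))⁻¹ := by rw [h3, inv_div]
        _ ≤ Real.sqrt (ψ τ) := h5
    calc Δ^2 / (1 + Δ * (1 - τ))^2 = (Δ / (1 + Δ * (1 - τ)))^2 := by rw [div_pow]
      _ ≤ (Real.sqrt (ψ τ))^2 := by
          apply sq_le_sq' _ h4
          have : 0 ≤ Δ / (1 + Δ * (1 - τ)) := by positivity
          linarith
      _ = ψ τ := Real.sq_sqrt hp.le
  -- continuity / integrability
  have hψcont : ContinuousOn ψ (Set.Icc (0:ℝ) 1) :=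
    fun τ hτ => ((hder τ (hsub hτ)).continuousAt).continuousWithinAt
  have hintψ : IntervalIntegrable ψ MeasureTheory.volume 0 1 :=
    (hψcont.mono (by rw [Set.uIcc_of_le zero_le_one])).intervalIntegrable
  have hdenc : ∀ τ ∈ Set.Icc (0:ℝ) 1, (0:ℝ) < 1 + Δ * (1 - τ) := by
    intro τ hτ; nlinarith [hτ.1, hτ.2]
  have hlowcont : ContinuousOn (fun τ => Δ^2 / (1 + Δ * (1 - τ))^2) (Set.Icc (0:ℝ) 1) := by
    apply ContinuousOn.div continuousOn_const (by fun_prop)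
    intro τ hτ
    exact pow_ne_zero _ (hdenc τ hτ).ne'
  have hintlow : IntervalIntegrable (fun τ => Δ^2 / (1 + Δ * (1 - τ))^2)
      MeasureTheory.volume 0 1 :=
    (hlowcont.mono (by rw [Set.uIcc_of_le zero_le_one])).intervalIntegrable
  -- value of the lower integral
  have hG : ∀ τ ∈ Set.uIcc (0:ℝ) 1,
      HasDerivAt (fun τ => Δ * (1 + Δ * (1 - τ))⁻¹) (Δ^2 / (1 + Δ * (1 - τ))^2) τ := by
    intro τ hτ
    rw [Set.uIcc_of_le zero_le_one] at hτ
    have h1 : HasDerivAt (fun τ : ℝ => 1 + Δ * (1 - τ)) (-Δ) τ := by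
      simpa using (((hasDerivAt_id τ).const_sub 1).const_mul Δ).const_add 1
    have h2 := (h1.inv (hdenc τ hτ).ne').const_mul Δ
    exact h2.congr_deriv (by ring)
  have hval : (∫ τ in (0:ℝ)..1, Δ^2 / (1 + Δ * (1 - τ))^2) = Δ^2 / (1 + Δ) := by
    rw [intervalIntegral.integral_eq_sub_of_hasDerivAt hG hintlow]
    have h1Δ : (1:ℝ) + Δ ≠ 0 := by positivity
    field_simp
    ring
  calc Δ^2 / (1 + Δ) = ∫ τ in (0:ℝ)..1, Δ^2 / (1 + Δ * (1 - τ))^2 := hval.symm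
    _ ≤ ∫ τ in (0:ℝ)..1, ψ τ := by
        apply intervalIntegral.integral_mono_on zero_le_one hintlow hintψ
        exact hlow

set_option maxHeartbeats 2000000 in
/-- Lemma 4.2: for the minimizers `x*_{t_k}`, `x*_{t_{k+1}}` of the penalized
problems with parameters `t_k, t_{k+1} > 0`, `d_k = t_{k+1} − t_k`, and
`Δ_k = ‖x*_{t_{k+1}} − x*_{t_k}‖_{x*_{t_{k+1}}} < 1`, one has
`Δ_k/(1+Δ_k) ≤ (|d_k|/t_k)·‖∇f(x*_{t_{k+1}})‖*_{x*_{t_{k+1}}} ≤ (|d_k|/t_k)·√ν`, and if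
`|d_k|·√ν < t_k` then `Δ_k ≤ |d_k|√ν/(t_k − |d_k|√ν)`. -/
theorem stmt11 {n : ℕ} (ν : ℝ) (hν : 0 < ν)
    (f g : EuclideanSpace ℝ (Fin n) → ℝ)
    (df dg : Set (EuclideanSpace ℝ (Fin n)))
    (hdf_open : IsOpen df) (hdf_conv : Convex ℝ df)
    (hf_smooth : ContDiffOn ℝ 3 f df)
    (hf_sc : StandardSelfConcordantOn f df)
    (hess : EuclideanSpace ℝ (Fin n) →
      EuclideanSpace ℝ (Fin n) →L[ℝ] EuclideanSpace ℝ (Fin n))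
    (hhess : ∀ x ∈ df, HasFDerivAt (fun y => gradient f y) (hess x) x)
    (hpd : ∀ x ∈ df, ∀ u : EuclideanSpace ℝ (Fin n), u ≠ 0 → 0 < ⟪u, hess x u⟫)
    -- `f` is a `ν`-self-concordant barrier
    (hbarrier : ∀ x ∈ df, ∀ u : EuclideanSpace ℝ (Fin n),
      2 * ⟪gradient f x, u⟫ - ⟪u, hess x u⟫ ≤ ν)
    (hg_cvx : ConvexOn ℝ dg g) (hg_lsc : LowerSemicontinuousOn g dg)
    (hg_proper : dg.Nonempty)
    (tk tk1 : ℝ) (htk : 0 < tk) (htk1 : 0 < tk1)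
    -- `x*_{t_k}` is the unique minimizer of `F(·; t_k)`
    (xsk : EuclideanSpace ℝ (Fin n)) (hxsk : xsk ∈ df ∩ dg)
    (hmink : ∀ x ∈ df ∩ dg, f xsk + tk⁻¹ * g xsk ≤ f x + tk⁻¹ * g x)
    (huniqk : ∀ x ∈ df ∩ dg,
      (∀ y ∈ df ∩ dg, f x + tk⁻¹ * g x ≤ f y + tk⁻¹ * g y) → x = xsk)
    -- `x*_{t_{k+1}}` is the unique minimizer of `F(·; t_{k+1})`
    (xsk1 : EuclideanSpace ℝ (Fin n)) (hxsk1 : xsk1 ∈ df ∩ dg)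
    (hmink1 : ∀ x ∈ df ∩ dg, f xsk1 + tk1⁻¹ * g xsk1 ≤ f x + tk1⁻¹ * g x)
    (huniqk1 : ∀ x ∈ df ∩ dg,
      (∀ y ∈ df ∩ dg, f x + tk1⁻¹ * g x ≤ f y + tk1⁻¹ * g y) → x = xsk1)
    (Δ : ℝ) (hΔ_def : Δ = locNorm (hess xsk1) (xsk1 - xsk)) (hΔ : Δ < 1) :
    Δ / (1 + Δ) ≤ (|tk1 - tk| / tk) * dualLocNorm (hess xsk1) (gradient f xsk1) ∧
    (|tk1 - tk| / tk) * dualLocNorm (hess xsk1) (gradient f xsk1) ≤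
      (|tk1 - tk| / tk) * Real.sqrt ν ∧
    (|tk1 - tk| * Real.sqrt ν < tk →
      Δ ≤ |tk1 - tk| * Real.sqrt ν / (tk - |tk1 - tk| * Real.sqrt ν)) := by
  obtain ⟨hxskdf, hxskdg⟩ := hxsk
  obtain ⟨hxsk1df, hxsk1dg⟩ := hxsk1
  set H := hess xsk1 with hHdef
  set v := gradient f xsk1 with hvdef
  set h : EuclideanSpace ℝ (Fin n) := xsk1 - xsk with hh
  have hΔ0 : 0 ≤ Δ := by rw [hΔ_def]; exact Real.sqrt_nonneg _
  -- relation between fderiv and gradient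
  have hgradf : ∀ z : EuclideanSpace ℝ (Fin n), ∀ w : EuclideanSpace ℝ (Fin n),
      fderiv ℝ f z w = ⟪gradient f z, w⟫ := by
    intro z w
    simp [gradient, InnerProductSpace.toDual_symm_apply]
  -- symmetry of the Hessian
  have hsymm : ∀ x ∈ df, ∀ a b : EuclideanSpace ℝ (Fin n),
      ⟪hess x a, b⟫ = ⟪hess x b, a⟫ := by
    intro x hx a b
    have hfd : ∀ᶠ y in nhds x, HasFDerivAt f (fderiv ℝ f y) y := by
      filter_upwards [hdf_open.mem_nhds hx] with y hy
      exact ((hf_smooth.contDiffAt (hdf_open.mem_nhds hy)).differentiableAt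
        (by norm_num)).hasFDerivAt
    have hf3 : ContDiffAt ℝ 3 f x := hf_smooth.contDiffAt (hdf_open.mem_nhds hx)
    have hfd2 : ContDiffAt ℝ 1 (fderiv ℝ f) x := hf3.fderiv_right (by norm_num)
    have hx2 : HasFDerivAt (fderiv ℝ f) (fderiv ℝ (fderiv ℝ f) x) x :=
      (hfd2.differentiableAt one_ne_zero).hasFDerivAt
    have hsym := second_derivative_symmetric_of_eventually hfd hx2
    have hlink : ∀ c w : EuclideanSpace ℝ (Fin n),
        fderiv ℝ (fderiv ℝ f) x c w = ⟪w, hess x c⟫ := by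
      intro c w
      have h1 : HasFDerivAt (fun y => fderiv ℝ f y w)
          ((ContinuousLinearMap.apply ℝ ℝ w).comp (fderiv ℝ (fderiv ℝ f) x)) x :=
        (ContinuousLinearMap.apply ℝ ℝ w).hasFDerivAt.comp x hx2
      have h2 : HasFDerivAt (fun y => fderiv ℝ f y w)
          ((innerSL ℝ w).comp (hess x)) x := by
        have h2' := (innerSL ℝ w).hasFDerivAt.comp x (hhess x hx)
        have heq : ((innerSL ℝ w) ∘ fun y => gradient f y) = fun y => fderiv ℝ f y w := by
          funext y
          show ⟪w, gradient f y⟫ = fderiv ℝ f y w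
          rw [hgradf, real_inner_comm]
        rwa [heq] at h2'
      have huniq := h1.unique h2
      calc fderiv ℝ (fderiv ℝ f) x c w
          = ((ContinuousLinearMap.apply ℝ ℝ w).comp (fderiv ℝ (fderiv ℝ f) x)) c := rfl
        _ = ((innerSL ℝ w).comp (hess x)) c := by rw [huniq]
        _ = ⟪w, hess x c⟫ := rfl
    calc ⟪hess x a, b⟫ = ⟪b, hess x a⟫ := real_inner_comm _ _
      _ = fderiv ℝ (fderiv ℝ f) x a b := (hlink a b).symm
      _ = fderiv ℝ (fderiv ℝ f) x b a := hsym a b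
      _ = ⟪a, hess x b⟫ := hlink b a
      _ = ⟪hess x b, a⟫ := real_inner_comm _ _
  -- invertibility of the Hessian at xsk1
  have hinj : Function.Injective H := by
    intro a b hab
    by_contra hne'
    have hsub : a - b ≠ 0 := sub_ne_zero.mpr hne'
    have := hpd xsk1 hxsk1df (a - b) hsub
    rw [map_sub, hab, sub_self, inner_zero_right] at this
    exact lt_irrefl 0 this
  have hsurj : Function.Surjective H :=
    (LinearMap.injective_iff_surjective (f := (H : EuclideanSpace ℝ (Fin n) →ₗ[ℝ]
      EuclideanSpace ℝ (Fin n)))).mp hinj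
  let e0 : EuclideanSpace ℝ (Fin n) ≃ₗ[ℝ] EuclideanSpace ℝ (Fin n) :=
    LinearEquiv.ofBijective (H : EuclideanSpace ℝ (Fin n) →ₗ[ℝ] EuclideanSpace ℝ (Fin n))
      ⟨hinj, hsurj⟩
  let e : EuclideanSpace ℝ (Fin n) ≃L[ℝ] EuclideanSpace ℝ (Fin n) :=
    e0.toContinuousLinearEquiv
  have hecoe : (e : EuclideanSpace ℝ (Fin n) →L[ℝ] EuclideanSpace ℝ (Fin n)) = H := by
    ext u; rfl
  have hHinv : H.inverse = (e.symm : EuclideanSpace ℝ (Fin n) →L[ℝ] EuclideanSpace ℝ (Fin n)) := by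
    rw [← hecoe, ContinuousLinearMap.inverse_equiv]
  set u : EuclideanSpace ℝ (Fin n) := H.inverse v with hu
  have hHu : H u = v := by
    rw [hu, hHinv, ← hecoe]
    simp
  set q : ℝ := ⟪v, u⟫ with hq
  have hqinv : ⟪v, H.inverse v⟫ = q := by rw [hq, hu]
  have hq_barrier : q ≤ ν := by
    have hb := hbarrier xsk1 hxsk1df u
    have h1 : ⟪u, H u⟫ = q := by rw [hHu, real_inner_comm, hq]
    rw [← hvdef, ← hHdef, h1, ← hq] at hb
    linarith
  have hdual_q : dualLocNorm H v = Real.sqrt q := by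
    unfold dualLocNorm
    rw [hqinv]
  have hdual_le : dualLocNorm H v ≤ Real.sqrt ν := by
    rw [hdual_q]; exact Real.sqrt_le_sqrt hq_barrier
  have hdual_nonneg : 0 ≤ dualLocNorm H v := by rw [hdual_q]; exact Real.sqrt_nonneg _
  -- the second conjunct
  have key2 : (|tk1 - tk| / tk) * dualLocNorm H v ≤ (|tk1 - tk| / tk) * Real.sqrt ν :=
    mul_le_mul_of_nonneg_left hdual_le (div_nonneg (abs_nonneg _) htk.le)
  -- generalized Cauchy-Schwarz
  have hq_nonneg : 0 ≤ q := by
    rcases eq_or_ne u 0 with hz | hz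
    · rw [hq, hz]; simp
    · have := hpd xsk1 hxsk1df u hz
      rw [← hHdef, hHu] at this
      rw [hq, real_inner_comm]
      exact this.le
  have hCS : |⟪h, v⟫| ≤ Δ * dualLocNorm H v := by
    have hquad : ∀ s : ℝ, 0 ≤ ⟪h, H h⟫ * (s * s) + (2 * ⟪h, v⟫) * s + q := by
      intro s
      have hP : 0 ≤ ⟪u + s • h, H (u + s • h)⟫ := by
        rcases eq_or_ne (u + s • h) 0 with hz | hz
        · rw [hz]; simp
        · have := hpd xsk1 hxsk1df _ hz
          rw [← hHdef] at this
          exact this.le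
      have s2 : H u = v := hHu
      have s1 : ⟪u, H h⟫ = ⟪h, v⟫ := by
        rw [real_inner_comm, hHdef, hsymm xsk1 hxsk1df h u, ← hHdef, s2, real_inner_comm]
      have s3 : ⟪u, H u⟫ = q := by rw [s2, real_inner_comm, hq]
      have hexp : ⟪u + s • h, H (u + s • h)⟫
          = ⟪h, H h⟫ * (s * s) + (2 * ⟪h, v⟫) * s + q := by
        rw [map_add, map_smul]
        rw [inner_add_left, inner_add_right, inner_add_right,
          real_inner_smul_left, real_inner_smul_left, real_inner_smul_right,
          real_inner_smul_right, s1, s3]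
        rw [s2]
        ring
      rw [hexp] at hP
      exact hP
    have hd := discrim_le_zero hquad
    rw [discrim] at hd
    have hhH_nonneg : 0 ≤ ⟪h, H h⟫ := by
      rcases eq_or_ne h 0 with hz | hz
      · rw [hz]; simp
      · have := hpd xsk1 hxsk1df h hz; rw [← hHdef] at this; exact this.le
    have hsq : ⟪h, v⟫ ^ 2 ≤ ⟪h, H h⟫ * q := by nlinarith [hd]
    calc |⟪h, v⟫| = Real.sqrt (⟪h, v⟫ ^ 2) := (Real.sqrt_sq_eq_abs _).symm
      _ ≤ Real.sqrt (⟪h, H h⟫ * q) := Real.sqrt_le_sqrt hsq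
      _ = Real.sqrt ⟪h, H h⟫ * Real.sqrt q := Real.sqrt_mul hhH_nonneg q
      _ = Δ * dualLocNorm H v := by rw [hΔ_def, hdual_q]; rfl
  -- the line segment setup
  set U : Set ℝ := {r : ℝ | xsk + r • h ∈ df} with hUdef
  have hUopen : IsOpen U := hdf_open.preimage (by fun_prop)
  have hIccU : Set.Icc (0:ℝ) 1 ⊆ U := by
    intro r hr
    have hc := hdf_conv hxskdf hxsk1df (by linarith [hr.2] : (0:ℝ) ≤ 1 - r) hr.1 (by ring)
    show xsk + r • h ∈ df
    have : xsk + r • h = (1 - r) • xsk + r • xsk1 := by rw [hh]; module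
    rw [this]; exact hc
  have hγ1 : xsk + (1:ℝ) • h = xsk1 := by rw [hh]; module
  have hγ0 : xsk + (0:ℝ) • h = xsk := by simp
  have hγd : ∀ τ : ℝ, HasDerivAt (fun r : ℝ => xsk + r • h) h τ := by
    intro τ
    simpa using ((hasDerivAt_id τ).smul_const h).const_add xsk
  set F : ℝ → ℝ := fun r : ℝ => f (xsk + r • h) with hFdef
  set φ : ℝ → ℝ := fun r : ℝ => ⟪h, gradient f (xsk + r • h)⟫ with hφdef
  set ψ : ℝ → ℝ := fun r : ℝ => ⟪h, hess (xsk + r • h) h⟫ with hψdef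
  have hb : ∀ τ ∈ U, HasDerivAt F (φ τ) τ := by
    intro τ hτ
    have hdfa : DifferentiableAt ℝ f (xsk + τ • h) :=
      (hf_smooth.contDiffAt (hdf_open.mem_nhds hτ)).differentiableAt (by norm_num)
    have := hdfa.hasFDerivAt.comp_hasDerivAt τ (hγd τ)
    have hval : fderiv ℝ f (xsk + τ • h) h = φ τ := by
      simp only [hφdef]; rw [hgradf, real_inner_comm]
    rw [← hval]
    exact this
  have hc : ∀ τ ∈ U, HasDerivAt φ (ψ τ) τ := by
    intro τ hτ
    have h1 := (hhess _ hτ).comp_hasDerivAt τ (hγd τ)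
    have h2 := (innerSL ℝ h).hasFDerivAt.comp_hasDerivAt τ h1
    exact h2
  have hderivF : ∀ τ ∈ U, deriv F τ = φ τ := fun τ hτ => (hb τ hτ).deriv
  have hD2 : ∀ τ ∈ U, deriv (deriv F) τ = ψ τ := by
    intro τ hτ
    have heq : deriv F =ᶠ[nhds τ] φ :=
      Filter.eventuallyEq_of_mem (hUopen.mem_nhds hτ) hderivF
    rw [heq.deriv_eq]
    exact (hc τ hτ).deriv
  have hF3 : ContDiffOn ℝ 3 F U :=
    hf_smooth.comp ((contDiff_const.add (contDiff_id.smul contDiff_const)).contDiffOn)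
      (fun r hr => hr)
  have hC1 : ContDiffOn ℝ 1 (deriv (deriv F)) U := by
    have s1 : ContDiffOn ℝ 2 (deriv F) U :=
      hF3.deriv_of_isOpen hUopen (show (2:WithTop ℕ∞) + 1 ≤ 3 by norm_num)
    exact s1.deriv_of_isOpen hUopen (show (1:WithTop ℕ∞) + 1 ≤ 2 by norm_num)
  have hψder : ∀ τ ∈ U, HasDerivAt ψ (deriv (deriv (deriv F)) τ) τ := by
    intro τ hτ
    have hdiff : DifferentiableAt ℝ (deriv (deriv F)) τ :=
      (hC1.differentiableOn one_ne_zero).differentiableAt (hUopen.mem_nhds hτ)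
    have h1 : HasDerivAt (deriv (deriv F)) (deriv (deriv (deriv F)) τ) τ := hdiff.hasDerivAt
    have heq : ψ =ᶠ[nhds τ] deriv (deriv F) :=
      Filter.eventuallyEq_of_mem (hUopen.mem_nhds hτ) (fun s hs => (hD2 s hs).symm)
    exact h1.congr_of_eventuallyEq heq
  have hiter2 : iteratedDeriv 2 F = deriv (deriv F) := by
    rw [iteratedDeriv_succ, iteratedDeriv_one]
  have hiter3 : iteratedDeriv 3 F = deriv (iteratedDeriv 2 F) := iteratedDeriv_succ
  have hψsc : ∀ τ ∈ U, |deriv (deriv (deriv F)) τ| ≤ 2 * (ψ τ) ^ ((3:ℝ)/2) := by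
    intro τ hτ
    have hthis := hf_sc xsk hxskdf h τ hτ
    rw [← hFdef] at hthis
    rw [hiter3, hiter2] at hthis
    rw [hD2 τ hτ] at hthis
    exact hthis
  -- integrability and FTC
  have hintψ : IntervalIntegrable ψ MeasureTheory.volume 0 1 := by
    apply ContinuousOn.intervalIntegrable
    rw [Set.uIcc_of_le zero_le_one]
    exact fun τ hτ => ((hψder τ (hIccU hτ)).continuousAt).continuousWithinAt
  have hFTC : (∫ τ in (0:ℝ)..1, ψ τ) = φ 1 - φ 0 :=
    intervalIntegral.integral_eq_sub_of_hasDerivAt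
      (fun τ hτ => hc τ (hIccU (by rwa [Set.uIcc_of_le zero_le_one] at hτ))) hintψ
  have hφ1 : φ 1 = ⟪h, v⟫ := by simp only [hφdef]; rw [hγ1, ← hvdef]
  have hφ0 : φ 0 = ⟪h, gradient f xsk⟫ := by simp only [hφdef]; rw [hγ0]
  -- optimality conditions
  have hdg_conv : Convex ℝ dg := hg_cvx.1
  have hdg_mem : ∀ τ ∈ Set.Icc (0:ℝ) 1, xsk + τ • h ∈ dg := by
    intro τ hτ
    have hc2 := hdg_conv hxskdg hxsk1dg (by linarith [hτ.2] : (0:ℝ) ≤ 1 - τ) hτ.1 (by ring)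
    have : xsk + τ • h = (1 - τ) • xsk + τ • xsk1 := by rw [hh]; module
    rw [this]; exact hc2
  have hgseg : ∀ τ ∈ Set.Icc (0:ℝ) 1, g (xsk + τ • h) ≤ (1 - τ) * g xsk + τ * g xsk1 := by
    intro τ hτ
    have hcv := hg_cvx.2 hxskdg hxsk1dg (by linarith [hτ.2] : (0:ℝ) ≤ 1 - τ) hτ.1 (by ring)
    have hpt : xsk + τ • h = (1 - τ) • xsk + τ • xsk1 := by rw [hh]; module
    rw [hpt]
    simpa [smul_eq_mul] using hcv
  have hti : (0:ℝ) < tk⁻¹ := inv_pos.mpr htk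
  have hopt1 : tk⁻¹ * (g xsk - g xsk1) ≤ ⟪h, gradient f xsk⟫ := by
    apply auxSlopeGe (F := F)
    · have := hb 0 (hIccU (Set.mem_Icc.mpr ⟨le_refl 0, zero_le_one⟩))
      rwa [hφ0] at this
    · intro τ hτ
      have hτIcc : τ ∈ Set.Icc (0:ℝ) 1 := ⟨hτ.1.le, hτ.2⟩
      have hmem : xsk + τ • h ∈ df ∩ dg := ⟨hIccU hτIcc, hdg_mem τ hτIcc⟩
      have h1 := hmink (xsk + τ • h) hmem
      have h2 := hgseg τ hτIcc
      have hF0 : F 0 = f xsk := by simp only [hFdef]; rw [hγ0]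
      have hFτ : F τ = f (xsk + τ • h) := rfl
      rw [hF0, hFτ]
      have e1 : tk⁻¹ * g (xsk + τ • h) ≤ tk⁻¹ * ((1 - τ) * g xsk + τ * g xsk1) :=
        mul_le_mul_of_nonneg_left h2 hti.le
      nlinarith [h1, e1]
  have hopt2 : tk1⁻¹ * (g xsk1 - g xsk) ≤ -⟪h, v⟫ := by
    have hti1 : (0:ℝ) < tk1⁻¹ := inv_pos.mpr htk1
    have hγd1 : HasDerivAt (fun r : ℝ => xsk1 + r • (-h)) (-h) 0 := by
      simpa using ((hasDerivAt_id (0:ℝ)).smul_const (-h)).const_add xsk1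
    have hpt : ∀ τ : ℝ, xsk1 + τ • (-h) = (1 - τ) • xsk1 + τ • xsk := by
      intro τ; rw [hh]; module
    apply auxSlopeGe (F := fun r : ℝ => f (xsk1 + r • (-h)))
    · have hdfa : DifferentiableAt ℝ f xsk1 :=
        (hf_smooth.contDiffAt (hdf_open.mem_nhds hxsk1df)).differentiableAt (by norm_num)
      have h0pt : xsk1 + (0:ℝ) • (-h) = xsk1 := by simp
      have hfd1 : HasFDerivAt f (fderiv ℝ f xsk1) (xsk1 + (0:ℝ) • (-h)) := by
        rw [h0pt]
        exact hdfa.hasFDerivAt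
      have hcomp := hfd1.comp_hasDerivAt 0 hγd1
      have hval : fderiv ℝ f xsk1 (-h) = -⟪h, v⟫ := by
        rw [hgradf, inner_neg_right, real_inner_comm, ← hvdef]
      rw [← hval]
      exact hcomp
    · intro τ hτ
      have hτIcc : τ ∈ Set.Icc (0:ℝ) 1 := ⟨hτ.1.le, hτ.2⟩
      have hmemdf : xsk1 + τ • (-h) ∈ df := by
        rw [hpt τ]
        exact hdf_conv hxsk1df hxskdf (by linarith [hτ.2] : (0:ℝ) ≤ 1 - τ) hτ.1.le (by ring)
      have hmemdg : xsk1 + τ • (-h) ∈ dg := by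
        rw [hpt τ]
        exact hdg_conv hxsk1dg hxskdg (by linarith [hτ.2] : (0:ℝ) ≤ 1 - τ) hτ.1.le (by ring)
      have h1 := hmink1 (xsk1 + τ • (-h)) ⟨hmemdf, hmemdg⟩
      have h2 : g (xsk1 + τ • (-h)) ≤ (1 - τ) * g xsk1 + τ * g xsk := by
        have hcv := hg_cvx.2 hxsk1dg hxskdg (by linarith [hτ.2] : (0:ℝ) ≤ 1 - τ) hτ.1.le
          (by ring)
        rw [hpt τ]
        simpa [smul_eq_mul] using hcv
      have hF0 : f (xsk1 + (0:ℝ) • (-h)) = f xsk1 := by simp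
      rw [hF0]
      have e1 : tk1⁻¹ * g (xsk1 + τ • (-h)) ≤ tk1⁻¹ * ((1 - τ) * g xsk1 + τ * g xsk) :=
        mul_le_mul_of_nonneg_left h2 hti1.le
      nlinarith [h1, e1]
  have hsum : tk1 * ⟪h, v⟫ ≤ tk * ⟪h, gradient f xsk⟫ := by
    have b1 : g xsk - g xsk1 ≤ tk * ⟪h, gradient f xsk⟫ := by
      have := mul_le_mul_of_nonneg_left hopt1 htk.le
      rwa [show tk * (tk⁻¹ * (g xsk - g xsk1)) = g xsk - g xsk1 by field_simp] at this
    have b2 : g xsk1 - g xsk ≤ tk1 * (-⟪h, v⟫) := by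
      have := mul_le_mul_of_nonneg_left hopt2 htk1.le
      rwa [show tk1 * (tk1⁻¹ * (g xsk1 - g xsk)) = g xsk1 - g xsk by field_simp] at this
    nlinarith [b1, b2]
  -- the first conjunct
  have key1 : Δ / (1 + Δ) ≤ (|tk1 - tk| / tk) * dualLocNorm H v := by
    rcases eq_or_lt_of_le hΔ0 with hΔz | hΔpos
    · rw [← hΔz]
      simp only [zero_add, zero_div]
      exact mul_nonneg (div_nonneg (abs_nonneg _) htk.le) hdual_nonneg
    · have hne : h ≠ 0 := by
        intro hz
        rw [hΔ_def, hz] at hΔpos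
        simp [locNorm] at hΔpos
      have hψpos : ∀ τ ∈ U, 0 < ψ τ := fun τ hτ => hpd _ hτ h hne
      have hψ1 : ψ 1 = Δ ^ 2 := by
        have : ψ 1 = ⟪h, H h⟫ := by simp only [hψdef]; rw [hγ1, ← hHdef]
        rw [this, hΔ_def]
        have hnn : 0 ≤ ⟪h, H h⟫ := by
          have := hpd xsk1 hxsk1df h hne
          rw [← hHdef] at this
          exact this.le
        rw [show locNorm H h = Real.sqrt ⟪h, H h⟫ from rfl, Real.sq_sqrt hnn]
      have hkey : Δ ^ 2 / (1 + Δ) ≤ φ 1 - φ 0 := by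
        rw [← hFTC]
        exact auxGronwall hUopen hIccU hψpos hψder hψsc hΔpos hψ1
      have hchain : tk * (Δ ^ 2 / (1 + Δ)) ≤ |tk1 - tk| * (Δ * dualLocNorm H v) := by
        have l1 : Δ ^ 2 / (1 + Δ) ≤ ⟪h, v⟫ - ⟪h, gradient f xsk⟫ := by
          rw [← hφ1, ← hφ0]; exact hkey
        have l2 : tk * (⟪h, v⟫ - ⟪h, gradient f xsk⟫) ≤ (tk - tk1) * ⟪h, v⟫ := by
          nlinarith [hsum]
        have l3 : (tk - tk1) * ⟪h, v⟫ ≤ |tk1 - tk| * |⟪h, v⟫| := by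
          calc (tk - tk1) * ⟪h, v⟫ ≤ |(tk - tk1) * ⟪h, v⟫| := le_abs_self _
            _ = |tk - tk1| * |⟪h, v⟫| := abs_mul _ _
            _ = |tk1 - tk| * |⟪h, v⟫| := by rw [abs_sub_comm]
        have l4 : |tk1 - tk| * |⟪h, v⟫| ≤ |tk1 - tk| * (Δ * dualLocNorm H v) :=
          mul_le_mul_of_nonneg_left hCS (abs_nonneg _)
        calc tk * (Δ ^ 2 / (1 + Δ)) ≤ tk * (⟪h, v⟫ - ⟪h, gradient f xsk⟫) :=
              mul_le_mul_of_nonneg_left l1 htk.le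
          _ ≤ (tk - tk1) * ⟪h, v⟫ := l2
          _ ≤ |tk1 - tk| * |⟪h, v⟫| := l3
          _ ≤ |tk1 - tk| * (Δ * dualLocNorm H v) := l4
      have h1Δ : (0:ℝ) < 1 + Δ := by linarith
      rw [div_mul_eq_mul_div, le_div_iff₀ htk]
      have hrw : tk * (Δ ^ 2 / (1 + Δ)) = (Δ / (1 + Δ) * tk) * Δ := by
        field_simp
      rw [hrw] at hchain
      have hrw2 : |tk1 - tk| * (Δ * dualLocNorm H v)
          = (|tk1 - tk| * dualLocNorm H v) * Δ := by ring
      rw [hrw2] at hchain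
      exact le_of_mul_le_mul_right hchain hΔpos
  refine ⟨key1, key2, ?_⟩
  -- the third conjunct
  intro hd
  have hρ0 : 0 ≤ |tk1 - tk| * Real.sqrt ν := mul_nonneg (abs_nonneg _) (Real.sqrt_nonneg _)
  have h1Δ : (0:ℝ) < 1 + Δ := by linarith
  have h1 : Δ / (1 + Δ) ≤ (|tk1 - tk| * Real.sqrt ν) / tk := by
    calc Δ / (1 + Δ) ≤ (|tk1 - tk| / tk) * dualLocNorm H v := key1
      _ ≤ (|tk1 - tk| / tk) * Real.sqrt ν := key2
      _ = (|tk1 - tk| * Real.sqrt ν) / tk := by rw [div_mul_eq_mul_div]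
  rw [div_le_div_iff₀ h1Δ htk] at h1
  rw [le_div_iff₀ (by linarith : (0:ℝ) < tk - |tk1 - tk| * Real.sqrt ν)]
  nlinarith [h1]
end

section
/- Let f : ℝⁿ → ℝ ∪ {+∞} be standard self-concordant on its open convex effective domain with ∇²f(x) positive definite for all x ∈ dom f, g : ℝⁿ → ℝ ∪ {+∞} proper, lower semicontinuous and convex, and t₀ > 0. Let x ∈ dom f ∩ dom g, let s̄ be the exact minimizer of the model F̂(·; t₀, x), and let s ∈ dom f ∩ dom g be a δ-solution of this subproblem for some δ ≥ 0. Set d := s − x and ζ := ‖d‖_x, and suppose δ < ζ. Then with the step size α := (ζ − δ)/((1 + ζ − δ)·ζ) ∈ (0, 1], the point x⁺ := x + α·d satisfies x⁺ ∈ dom f and F(x⁺; t₀) ≤ F(x; t₀) − ω(ζ − δ), where F(·;t₀) := f + t₀⁻¹g and ω(τ) := τ − ln(1+τ). -/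
open RealInnerProductSpace

private lemma aux_nonneg_limit (L K : ℝ) (hK : 0 ≤ K)
    (h : ∀ t : ℝ, 0 < t → t ≤ 1 → 0 ≤ L + t * K) : 0 ≤ L := by
  by_contra hL
  push_neg at hL
  have hK1 : (0:ℝ) < K + 1 := by linarith
  have htpos : 0 < -L / (K + 1) := div_pos (by linarith) hK1
  have h1 := h (min 1 (-L / (K + 1))) (lt_min one_pos htpos) (min_le_left _ _)
  have h2 : min 1 (-L / (K + 1)) ≤ -L / (K + 1) := min_le_right _ _
  have h3 : min 1 (-L / (K + 1)) * K ≤ (-L / (K + 1)) * K :=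
    mul_le_mul_of_nonneg_right h2 hK
  have h4 : (-L / (K + 1)) * K < -L := by
    rw [div_mul_eq_mul_div, div_lt_iff₀ hK1]
    nlinarith
  linarith

private lemma aux_discrim (a b c : ℝ) (hc : 0 ≤ c)
    (h : ∀ t : ℝ, 0 ≤ a + 2 * b * t + c * t ^ 2) : b ^ 2 ≤ a * c := by
  rcases hc.lt_or_eq with hc' | hc'
  · have := h (-b / c)
    have hc0 : c ≠ 0 := ne_of_gt hc'
    have key : 0 ≤ (a * c - b ^ 2) / c := by
      have : a + 2 * b * (-b / c) + c * (-b / c) ^ 2 = (a * c - b ^ 2) / c := by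
        field_simp; ring
      rw [← this]; exact h (-b / c)
    have h5 := (le_div_iff₀ hc').mp key
    linarith
  · have hb : b = 0 := by
      by_contra hb
      have ha : 0 ≤ a := by simpa using h 0
      have := h (-(a + 1) / (2 * b))
      rw [← hc'] at this
      have h2b : (2 : ℝ) * b ≠ 0 := by simpa using hb
      rw [mul_div_assoc'] at this
      rw [mul_div_cancel_left₀ _ h2b] at this
      simp at this
      linarith
    rw [hb, ← hc']
    norm_num


set_option maxHeartbeats 4000000 in
/-- Lemma 4.3, inexact damped proximal-Newton step: with `d = s − x`,
`ζ = ‖d‖_x`, `δ < ζ` and step size `α = (ζ − δ)/((1 + ζ − δ)ζ) ∈ (0,1]`, the point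
`x⁺ = x + α d` lies in `dom f` and `F(x⁺; t₀) ≤ F(x; t₀) − ω(ζ − δ)`. -/
theorem stmt12 {n : ℕ} (f g : EuclideanSpace ℝ (Fin n) → ℝ)
    (df dg : Set (EuclideanSpace ℝ (Fin n)))
    (hdf_open : IsOpen df) (hdf_conv : Convex ℝ df)
    (hf_smooth : ContDiffOn ℝ 3 f df)
    (hf_sc : StandardSelfConcordantOn f df)
    (hess : EuclideanSpace ℝ (Fin n) →
      EuclideanSpace ℝ (Fin n) →L[ℝ] EuclideanSpace ℝ (Fin n))
    (hhess : ∀ x ∈ df, HasFDerivAt (fun y => gradient f y) (hess x) x)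
    (hpd : ∀ x ∈ df, ∀ u : EuclideanSpace ℝ (Fin n), u ≠ 0 → 0 < ⟪u, hess x u⟫)
    (hg_cvx : ConvexOn ℝ dg g) (hg_lsc : LowerSemicontinuousOn g dg)
    (hg_proper : dg.Nonempty)
    (t0 : ℝ) (ht0 : 0 < t0)
    (x : EuclideanSpace ℝ (Fin n)) (hx : x ∈ df ∩ dg)
    -- the composite quadratic model `F̂(·; t₀, x)` around `x`
    (Fhat : EuclideanSpace ℝ (Fin n) → ℝ)
    (hFhat : ∀ y, Fhat y = f x + ⟪gradient f x, y - x⟫ +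
      (1/2) * ⟪y - x, hess x (y - x)⟫ + t0⁻¹ * g y)
    -- `s̄` is the exact minimizer of the model
    (sbar : EuclideanSpace ℝ (Fin n)) (hsbar_mem : sbar ∈ dg)
    (hsbar_min : ∀ y ∈ dg, Fhat sbar ≤ Fhat y)
    -- `s` is a `δ`-solution of the subproblem
    (δ : ℝ) (hδ : 0 ≤ δ)
    (s : EuclideanSpace ℝ (Fin n)) (hs : s ∈ df ∩ dg)
    (hs_δ : Fhat s - Fhat sbar ≤ δ ^ 2 / 2)
    (d : EuclideanSpace ℝ (Fin n)) (hd : d = s - x)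
    (ζ : ℝ) (hζ : ζ = locNorm (hess x) d)
    (hδζ : δ < ζ)
    (α : ℝ) (hα : α = (ζ - δ) / ((1 + ζ - δ) * ζ)) :
    0 < α ∧ α ≤ 1 ∧ x + α • d ∈ df ∧ x + α • d ∈ dg ∧
      f (x + α • d) + t0⁻¹ * g (x + α • d) ≤
        f x + t0⁻¹ * g x - ((ζ - δ) - Real.log (1 + (ζ - δ))) := by
  obtain ⟨hxdf, hxdg⟩ := hx
  obtain ⟨hsdf, hsdg⟩ := hs
  set c : ℝ := ζ - δ with hc
  have hcpos : 0 < c := sub_pos.2 hδζ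
  have hζpos : 0 < ζ := lt_of_le_of_lt hδ hδζ
  have hζne : ζ ≠ 0 := ne_of_gt hζpos
  have hcζ : c ≤ ζ := by rw [hc]; linarith
  have h1c : (0:ℝ) < 1 + c := by linarith
  have hαval : α = c / ((1 + c) * ζ) := by rw [hα, hc]; ring_nf
  have hαpos : 0 < α := by
    rw [hαval]; exact div_pos hcpos (mul_pos h1c hζpos)
  have hαζ : α * ζ = c / (1 + c) := by
    rw [hαval]; field_simp
  have hαζ1 : α * ζ < 1 := by
    rw [hαζ, div_lt_one h1c]; linarith
  have hα1 : α ≤ 1 := by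
    rw [hαval, div_le_one (mul_pos h1c hζpos)]; nlinarith
  -- membership of the segment
  have hseg : ∀ τ : ℝ, 0 ≤ τ → τ ≤ 1 → x + τ • d ∈ df := by
    intro τ h0 h1
    have hpt : x + τ • d = (1 - τ) • x + τ • s := by rw [hd]; module
    rw [hpt]; exact hdf_conv hxdf hsdf (by linarith) h0 (by ring)
  have hxplus_dg : x + α • d ∈ dg := by
    have hpt : x + α • d = (1 - α) • x + α • s := by rw [hd]; module
    rw [hpt]; exact hg_cvx.1 hxdg hsdg (by linarith) hαpos.le (by ring)
  refine ⟨hαpos, hα1, hseg α hαpos.le hα1, hxplus_dg, ?_⟩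
  -- PSD of the Hessian at x
  have hpsd : ∀ y ∈ df, ∀ u : EuclideanSpace ℝ (Fin n), 0 ≤ ⟪u, hess y u⟫ := by
    intro y hy u
    rcases eq_or_ne u 0 with h | h
    · rw [h]; simp
    · exact (hpd y hy u h).le
  have hζ' : ζ = Real.sqrt ⟪d, hess x d⟫ := hζ
  have hζsq : ⟪d, hess x d⟫ = ζ ^ 2 := by
    rw [hζ', Real.sq_sqrt (hpsd x hxdf d)]
  have hd0 : d ≠ 0 := by
    intro h
    rw [hζ', h] at hζpos
    simp at hζpos
  ----------------------------------------------------------------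
  -- PART 1 : model decrease
  ----------------------------------------------------------------
  have hA : ⟪gradient f x, d⟫ + t0⁻¹ * (g s - g x) ≤ -(ζ * c) := by
    have ht0inv' : (0:ℝ) ≤ t0⁻¹ := by positivity
    have hstrong : ∀ y ∈ dg, Fhat sbar + (1/2) * ⟪y - sbar, hess x (y - sbar)⟫ ≤ Fhat y := by
      intro y hy
      set u := y - sbar with hu
      have hyu : y = sbar + u := by rw [hu]; abel
      set Lq : ℝ := ⟪gradient f x, u⟫ + (1/2) * ⟪sbar - x, hess x u⟫
        + (1/2) * ⟪u, hess x (sbar - x)⟫ with hLq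
      set K : ℝ := ⟪u, hess x u⟫ with hK
      have hKnn : 0 ≤ K := hpsd x hxdf u
      have hexp : ∀ t : ℝ, Fhat (sbar + t • u)
          = Fhat sbar - t0⁻¹ * g sbar + t0⁻¹ * g (sbar + t • u)
            + t * Lq + t^2 * ((1/2) * K) := by
        intro t
        simp only [hFhat, hLq, hK]
        have h1 : sbar + t • u - x = (sbar - x) + t • u := by abel
        rw [h1]
        simp only [inner_add_left, inner_add_right, map_add, map_smul,
          real_inner_smul_left, real_inner_smul_right]
        ring
      have hLg : 0 ≤ Lq + t0⁻¹ * (g y - g sbar) := by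
        apply aux_nonneg_limit _ ((1/2) * K) (by linarith)
        intro t ht0' ht1
        have hmem : sbar + t • u ∈ dg := by
          have hpt : sbar + t • u = (1 - t) • sbar + t • y := by rw [hu]; module
          rw [hpt]; exact hg_cvx.1 hsbar_mem hy (by linarith) ht0'.le (by ring)
        have hcvx : g (sbar + t • u) ≤ (1 - t) * g sbar + t * g y := by
          have hpt : sbar + t • u = (1 - t) • sbar + t • y := by rw [hu]; module
          rw [hpt]
          simpa using hg_cvx.2 hsbar_mem hy (by linarith) ht0'.le (by ring)
        have hmin := hsbar_min _ hmem
        rw [hexp t] at hmin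
        have hgle := mul_le_mul_of_nonneg_left hcvx ht0inv'
        have h0 : 0 ≤ t * ((Lq + t0⁻¹ * (g y - g sbar)) + t * ((1/2) * K)) := by
          nlinarith [hmin, hgle]
        exact nonneg_of_mul_nonneg_right h0 ht0'
      have hy_exp := hexp 1
      rw [one_smul, ← hyu] at hy_exp
      linarith [hLg, hy_exp]
    have hFx : Fhat x = f x + t0⁻¹ * g x := by rw [hFhat]; simp
    have hFs : Fhat s = f x + ⟪gradient f x, d⟫ + (1/2) * ζ^2 + t0⁻¹ * g s := by
      rw [hFhat, ← hd, hζsq]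
    set e := s - sbar with he
    set w := x - sbar with hw
    have hwe : w = e - d := by rw [hw, he, hd]; abel
    have hBee : ⟪e, hess x e⟫ ≤ δ ^ 2 := by
      have h1 := hstrong s hsdg
      rw [← he] at h1
      linarith [hs_δ]
    set β := Real.sqrt ⟪e, hess x e⟫ with hβ
    have hβnn : 0 ≤ β := Real.sqrt_nonneg _
    have hβsq : β ^ 2 = ⟪e, hess x e⟫ := Real.sq_sqrt (hpsd x hxdf e)
    have hβδ : β ≤ δ := by
      have h1 : β ≤ Real.sqrt (δ^2) := Real.sqrt_le_sqrt hBee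
      rwa [Real.sqrt_sq hδ] at h1
    set b := (⟪e, hess x d⟫ + ⟪d, hess x e⟫) / 2 with hb
    have hCS : b ^ 2 ≤ ζ ^ 2 * ⟪e, hess x e⟫ := by
      have haux := aux_discrim ⟪d, hess x d⟫ b ⟪e, hess x e⟫ (hpsd x hxdf e) ?_
      · rw [hζsq] at haux; exact haux
      · intro t
        have h0 := hpsd x hxdf (d + t • e)
        simp only [inner_add_left, inner_add_right, map_add, map_smul,
          real_inner_smul_left, real_inner_smul_right] at h0
        rw [hb]; nlinarith [h0]
    have hbound : b ≤ ζ * β := by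
      nlinarith [hCS, hβsq, mul_nonneg hζpos.le hβnn, sq_nonneg (b - ζ*β), sq_nonneg (b + ζ*β)]
    have hww : (ζ - δ)^2 ≤ ⟪w, hess x w⟫ := by
      have hexpw : ⟪w, hess x w⟫ = ⟪e, hess x e⟫ - 2 * b + ζ ^ 2 := by
        rw [hwe, hb]
        simp only [inner_sub_left, inner_sub_right, map_sub]
        linear_combination hζsq
      nlinarith [hexpw, hβsq, hbound, hβδ, hcζ, hβnn]
    have hFxb := hstrong x hxdg
    rw [← hw] at hFxb
    have hchain : Fhat s ≤ Fhat x - (1/2) * (ζ - δ)^2 + δ^2/2 := by linarith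
    rw [hFs, hFx] at hchain
    rw [hc]
    nlinarith [hchain]
  ----------------------------------------------------------------
  -- PART 2 : self-concordance upper bound along the segment
  ----------------------------------------------------------------
  have hf_bound : f (x + α • d) ≤ f x + α * ⟪gradient f x, d⟫ - α * ζ + Real.log (1 + c) := by
    set I : Set ℝ := (fun τ : ℝ => x + τ • d) ⁻¹' df with hIdef
    have hIopen : IsOpen I :=
      hdf_open.preimage (continuous_const.add (continuous_id.smul continuous_const))
    have hJI : Set.Icc (0:ℝ) α ⊆ I := fun τ hτ => hseg τ hτ.1 (le_trans hτ.2 hα1)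
    have h0J : (0:ℝ) ∈ Set.Icc (0:ℝ) α := Set.left_mem_Icc.mpr hαpos.le
    have hαJ : α ∈ Set.Icc (0:ℝ) α := Set.right_mem_Icc.mpr hαpos.le
    set φ : ℝ → ℝ := fun τ => f (x + τ • d) with hφdef
    set φ₁ : ℝ → ℝ := fun τ => ⟪gradient f (x + τ • d), d⟫ with hφ₁def
    set φ₂ : ℝ → ℝ := fun τ => ⟪d, hess (x + τ • d) d⟫ with hφ₂def
    have hline : ∀ τ : ℝ, HasDerivAt (fun r : ℝ => x + r • d) d τ := by
      intro τ
      simpa using ((hasDerivAt_id τ).smul_const d).const_add x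
    have hφ' : ∀ τ ∈ I, HasDerivAt φ (φ₁ τ) τ := by
      intro τ hτ
      have hdiff : DifferentiableAt ℝ f (x + τ • d) :=
        (hf_smooth.differentiableOn (by norm_num)).differentiableAt (hdf_open.mem_nhds hτ)
      have hgrad := hdiff.hasGradientAt
      rw [hasGradientAt_iff_hasFDerivAt] at hgrad
      have hcomp := hgrad.comp_hasDerivAt τ (hline τ)
      simpa [hφdef, hφ₁def, Function.comp_def, InnerProductSpace.toDual_apply_apply] using hcomp
    have hφ₁' : ∀ τ ∈ I, HasDerivAt φ₁ (φ₂ τ) τ := by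
      intro τ hτ
      have hcomp := (hhess _ hτ).comp_hasDerivAt τ (hline τ)
      have h2 := hcomp.inner ℝ (hasDerivAt_const τ d)
      have h3 : φ₂ τ = ⟪hess (x + τ • d) d, d⟫ := real_inner_comm _ _
      simpa [h3, hφ₁def] using h2
    have hφ₂pos : ∀ τ ∈ I, 0 < φ₂ τ := fun τ hτ => hpd _ hτ d hd0
    have hgradC2 : ContDiffOn ℝ 2 (gradient f) df := by
      have h1 : ContDiffOn ℝ 2 (fderiv ℝ f) df :=
        hf_smooth.fderiv_of_isOpen hdf_open (by norm_num)
      exact (InnerProductSpace.toDual ℝ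
        (EuclideanSpace ℝ (Fin n))).symm.contDiff.comp_contDiffOn h1
    have hH'diff : DifferentiableOn ℝ (fderiv ℝ (gradient f)) df :=
      (hgradC2.fderiv_of_isOpen (m := 1) hdf_open (by norm_num)).differentiableOn one_ne_zero
    have hess_eq : ∀ y ∈ df, hess y = fderiv ℝ (gradient f) y := by
      intro y hy
      exact ((hhess y hy).fderiv).symm
    have hφ₂diff : ∀ τ ∈ I, DifferentiableAt ℝ φ₂ τ := by
      intro τ hτ
      have h1 : DifferentiableAt ℝ (fun r : ℝ => fderiv ℝ (gradient f) (x + r • d)) τ :=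
        (hH'diff.differentiableAt (hdf_open.mem_nhds hτ)).comp τ (hline τ).differentiableAt
      have h2 : DifferentiableAt ℝ (fun r : ℝ => ⟪d, fderiv ℝ (gradient f) (x + r • d) d⟫) τ :=
        (differentiableAt_const d).inner ℝ (h1.clm_apply (differentiableAt_const d))
      have heq : φ₂ =ᶠ[nhds τ] fun r => ⟪d, fderiv ℝ (gradient f) (x + r • d) d⟫ :=
        Filter.eventuallyEq_of_mem (hIopen.mem_nhds hτ) (fun r hr => by
          simp only [hφ₂def]
          rw [hess_eq _ hr])
      exact heq.differentiableAt_iff.mpr h2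
    have hderiv1 : ∀ τ ∈ I, deriv φ τ = φ₁ τ := fun τ hτ => (hφ' τ hτ).deriv
    have hid2 : ∀ τ ∈ I, iteratedDeriv 2 φ τ = φ₂ τ := by
      intro τ hτ
      have e1 : deriv φ =ᶠ[nhds τ] φ₁ :=
        Filter.eventuallyEq_of_mem (hIopen.mem_nhds hτ) hderiv1
      have h21 : iteratedDeriv 2 φ τ = deriv (deriv φ) τ := by
        show iteratedDeriv (1+1) φ τ = _
        rw [iteratedDeriv_succ, iteratedDeriv_one]
      rw [h21, e1.deriv_eq, (hφ₁' τ hτ).deriv]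
    have hid3 : ∀ τ ∈ I, HasDerivAt φ₂ (iteratedDeriv 3 φ τ) τ := by
      intro τ hτ
      have e2 : iteratedDeriv 2 φ =ᶠ[nhds τ] φ₂ :=
        Filter.eventuallyEq_of_mem (hIopen.mem_nhds hτ) hid2
      have h3 : iteratedDeriv 3 φ τ = deriv φ₂ τ := by
        show iteratedDeriv (2+1) φ τ = _
        rw [iteratedDeriv_succ, e2.deriv_eq]
      rw [h3]
      exact (hφ₂diff τ hτ).hasDerivAt
    have hsc : ∀ τ ∈ I, |iteratedDeriv 3 φ τ| ≤ 2 * (φ₂ τ * Real.sqrt (φ₂ τ)) := by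
      intro τ hτ
      have h1 := hf_sc x hxdf d τ hτ
      rw [← hφdef] at h1
      rw [hid2 τ hτ] at h1
      have hp := hφ₂pos τ hτ
      rwa [show ((3:ℝ)/2) = (1:ℝ) + 1/2 by norm_num, Real.rpow_add hp,
        Real.rpow_one, ← Real.sqrt_eq_rpow] at h1
    set ψ : ℝ → ℝ := fun τ => (Real.sqrt (φ₂ τ))⁻¹ with hψdef
    have hψ' : ∀ τ ∈ I, HasDerivAt ψ
        (-(iteratedDeriv 3 φ τ / (2 * Real.sqrt (φ₂ τ))) / (Real.sqrt (φ₂ τ))^2) τ := by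
      intro τ hτ
      exact ((hid3 τ hτ).sqrt (ne_of_gt (hφ₂pos τ hτ))).inv
        (ne_of_gt (Real.sqrt_pos.mpr (hφ₂pos τ hτ)))
    have hψbound : ∀ τ ∈ I,
        ‖-(iteratedDeriv 3 φ τ / (2 * Real.sqrt (φ₂ τ))) / (Real.sqrt (φ₂ τ))^2‖ ≤ 1 := by
      intro τ hτ
      have hp := hφ₂pos τ hτ
      have hsp := Real.sqrt_pos.mpr hp
      have hsq : Real.sqrt (φ₂ τ) ^ 2 = φ₂ τ := Real.sq_sqrt hp.le
      have hq := hsc τ hτ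
      have h1 : ‖-(iteratedDeriv 3 φ τ / (2 * Real.sqrt (φ₂ τ))) / (Real.sqrt (φ₂ τ))^2‖
          = |iteratedDeriv 3 φ τ| / (2 * Real.sqrt (φ₂ τ) * φ₂ τ) := by
        rw [Real.norm_eq_abs, abs_div, abs_neg, abs_div,
          abs_of_pos (by linarith : (0:ℝ) < 2 * Real.sqrt (φ₂ τ)),
          abs_of_pos (by nlinarith : (0:ℝ) < Real.sqrt (φ₂ τ) ^ 2), hsq, div_div]
      rw [h1, div_le_one (by nlinarith)]
      calc |iteratedDeriv 3 φ τ| ≤ 2 * (φ₂ τ * Real.sqrt (φ₂ τ)) := hq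
        _ = 2 * Real.sqrt (φ₂ τ) * φ₂ τ := by ring
    have hψ0 : ψ 0 = ζ⁻¹ := by
      have h0 : φ₂ 0 = ⟪d, hess x d⟫ := by simp [hφ₂def]
      simp only [hψdef]
      rw [h0, ← hζ']
    have hMVT : ∀ τ ∈ Set.Icc (0:ℝ) α, ζ⁻¹ - τ ≤ ψ τ := by
      intro τ hτ
      have h1 := Convex.norm_image_sub_le_of_norm_hasDerivWithin_le
        (fun t ht => (hψ' t (hJI ht)).hasDerivWithinAt)
        (fun t ht => hψbound t (hJI ht)) (convex_Icc 0 α) h0J hτ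
      rw [Real.norm_eq_abs, Real.norm_eq_abs, sub_zero, one_mul, abs_of_nonneg hτ.1] at h1
      have h2 := (abs_le.mp h1).1
      rw [hψ0] at h2
      linarith
    have hinvpos : ∀ τ ∈ Set.Icc (0:ℝ) α, 0 < ζ⁻¹ - τ := by
      intro τ hτ
      have hαζinv : α < ζ⁻¹ := by
        rw [inv_eq_one_div, lt_div_iff₀ hζpos]
        exact hαζ1
      linarith [hτ.2]
    set r : ℝ → ℝ := fun τ => (ζ⁻¹ - τ)⁻¹ with hrdef
    have hpb : ∀ τ ∈ Set.Icc (0:ℝ) α, φ₂ τ ≤ r τ ^ 2 := by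
      intro τ hτ
      have h1 := hMVT τ hτ
      have h2 := hinvpos τ hτ
      have hp := hφ₂pos τ (hJI hτ)
      have hsp := Real.sqrt_pos.mpr hp
      have h3 : Real.sqrt (φ₂ τ) ≤ (ζ⁻¹ - τ)⁻¹ := by
        have h4 := inv_anti₀ h2 h1
        simp only [hψdef] at h4
        rwa [inv_inv] at h4
      calc φ₂ τ = Real.sqrt (φ₂ τ) ^ 2 := (Real.sq_sqrt hp.le).symm
        _ ≤ ((ζ⁻¹ - τ)⁻¹) ^ 2 := pow_le_pow_left₀ hsp.le h3 2
        _ = r τ ^ 2 := rfl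
    have hr' : ∀ τ ∈ Set.Icc (0:ℝ) α, HasDerivAt r (r τ ^ 2) τ := by
      intro τ hτ
      have h2 := (hinvpos τ hτ).ne'
      have hlin : HasDerivAt (fun t : ℝ => ζ⁻¹ - t) (-1) τ := by
        simpa using (hasDerivAt_id τ).const_sub ζ⁻¹
      have h3 := hlin.inv h2
      refine h3.congr_deriv ?_
      symm
      simp only [hrdef]
      rw [inv_pow, neg_neg, one_div]
    have hr0 : r 0 = ζ := by
      simp only [hrdef]
      rw [sub_zero, inv_inv]
    set G : ℝ → ℝ := fun τ => φ₁ τ - r τ with hGdef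
    have hG' : ∀ τ ∈ Set.Icc (0:ℝ) α, HasDerivAt G (φ₂ τ - r τ ^ 2) τ :=
      fun τ hτ => (hφ₁' τ (hJI hτ)).sub (hr' τ hτ)
    have hGanti : AntitoneOn G (Set.Icc 0 α) := by
      apply antitoneOn_of_deriv_nonpos (convex_Icc 0 α)
      · exact fun τ hτ => (hG' τ hτ).continuousAt.continuousWithinAt
      · intro τ hτ
        rw [interior_Icc] at hτ
        exact ((hG' τ (Set.mem_Icc_of_Ioo hτ)).differentiableAt).differentiableWithinAt
      · intro τ hτ
        rw [interior_Icc] at hτ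
        have hτ' := Set.mem_Icc_of_Ioo hτ
        rw [(hG' τ hτ').deriv]
        linarith [hpb τ hτ']
    have hGle : ∀ τ ∈ Set.Icc (0:ℝ) α, G τ ≤ G 0 :=
      fun τ hτ => hGanti h0J hτ hτ.1
    set Φ : ℝ → ℝ := fun τ => φ τ - τ * (φ₁ 0 - ζ) + Real.log (ζ⁻¹ - τ) with hΦdef
    have hΦ' : ∀ τ ∈ Set.Icc (0:ℝ) α, HasDerivAt Φ (G τ - G 0) τ := by
      intro τ hτ
      have h2 := (hinvpos τ hτ).ne'
      have hlin : HasDerivAt (fun t : ℝ => ζ⁻¹ - t) (-1) τ := by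
        simpa using (hasDerivAt_id τ).const_sub ζ⁻¹
      have hlog := hlin.log h2
      have hmul : HasDerivAt (fun t : ℝ => t * (φ₁ 0 - ζ)) (φ₁ 0 - ζ) τ := by
        simpa using (hasDerivAt_id τ).mul_const (φ₁ 0 - ζ)
      have hsum := ((hφ' τ (hJI hτ)).sub hmul).add hlog
      refine hsum.congr_deriv ?_
      symm
      simp only [hGdef, hrdef, sub_zero, inv_inv]
      ring
    have hΦanti : AntitoneOn Φ (Set.Icc 0 α) := by
      apply antitoneOn_of_deriv_nonpos (convex_Icc 0 α)
      · exact fun τ hτ => (hΦ' τ hτ).continuousAt.continuousWithinAt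
      · intro τ hτ
        rw [interior_Icc] at hτ
        exact ((hΦ' τ (Set.mem_Icc_of_Ioo hτ)).differentiableAt).differentiableWithinAt
      · intro τ hτ
        rw [interior_Icc] at hτ
        have hτ' := Set.mem_Icc_of_Ioo hτ
        rw [(hΦ' τ hτ').deriv]
        linarith [hGle τ hτ']
    have hΦle : Φ α ≤ Φ 0 := hΦanti h0J hαJ hαpos.le
    have hφ0 : φ 0 = f x := by simp [hφdef]
    have hφ₁0 : φ₁ 0 = ⟪gradient f x, d⟫ := by simp [hφ₁def]
    have hlogdiff : Real.log ζ⁻¹ - Real.log (ζ⁻¹ - α) = Real.log (1 + c) := by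
      have hval : ζ⁻¹ - α = ((1 + c) * ζ)⁻¹ := by
        rw [hαval]
        field_simp
        ring
      rw [hval, Real.log_inv, Real.log_inv, Real.log_mul (by positivity) hζne]
      ring
    have hfin : φ α ≤ f x + α * ⟪gradient f x, d⟫ - α * ζ + Real.log (1 + c) := by
      simp only [hΦdef, zero_mul, sub_zero] at hΦle
      rw [hφ0, hφ₁0] at hΦle
      have hexp : α * (⟪gradient f x, d⟫ - ζ) = α * ⟪gradient f x, d⟫ - α * ζ := by ring
      linarith [hΦle, hlogdiff, hexp]
    exact hfin
  ----------------------------------------------------------------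
  -- PART 3 : convexity of g and final assembly
  ----------------------------------------------------------------
  have hg_bound : g (x + α • d) ≤ (1 - α) * g x + α * g s := by
    have hpt : x + α • d = (1 - α) • x + α • s := by rw [hd]; module
    rw [hpt]
    simpa using hg_cvx.2 hxdg hsdg (by linarith) hαpos.le (by ring)
  have ht0inv : (0:ℝ) ≤ t0⁻¹ := by positivity
  have hkey : α * ζ * c + α * ζ = c := by
    rw [hαval]; field_simp; ring
  have hmul := mul_le_mul_of_nonneg_left hA hαpos.le
  have hgmul := mul_le_mul_of_nonneg_left hg_bound ht0inv
  nlinarith [hmul, hgmul, hf_bound, hkey]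
end

section
/- Let f : ℝⁿ → ℝ ∪ {+∞} be convex and differentiable on its open convex effective domain dom f, and suppose the barrier property ∇f(x)ᵀ(y − x) ≤ ν holds for all x ∈ dom f and all y ∈ Ω, where Ω := closure(dom f) and ν > 0. Let g : ℝⁿ → ℝ ∪ {+∞} be proper, lower semicontinuous and convex, let t > 0, and let x*_t ∈ dom f ∩ dom g minimize f + t⁻¹g over ℝⁿ with the first-order optimality condition −t·∇f(x*_t) ∈ ∂g(x*_t). Let x* ∈ Ω with g(x*) finite be a minimizer of g over Ω. Then 0 ≤ g(x*_t) − g(x*) ≤ t·ν. -/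
open RealInnerProductSpace

/-- Lemma 5.1, estimate (5.2): let `f` be convex and differentiable on its
open convex effective domain with the barrier property `⟪∇f(x), y − x⟫ ≤ ν` for all
`x ∈ dom f`, `y ∈ Ω := closure (dom f)`, let `x*_t ∈ dom f ∩ dom g` minimize `f + t⁻¹ g`
with the first-order condition `−t∇f(x*_t) ∈ ∂g(x*_t)`, and let `x*` minimize `g` over `Ω`.
Then `0 ≤ g(x*_t) − g(x*) ≤ t·ν`. -/
theorem stmt16 {n : ℕ} (ν : ℝ) (hν : 0 < ν)
    (f g : EuclideanSpace ℝ (Fin n) → ℝ)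
    (df dg : Set (EuclideanSpace ℝ (Fin n)))
    (hdf_open : IsOpen df) (hdf_conv : Convex ℝ df)
    (hf_cvx : ConvexOn ℝ df f)
    (hf_diff : ∀ x ∈ df, DifferentiableAt ℝ f x)
    (hbarrier : ∀ x ∈ df, ∀ y ∈ closure df, ⟪gradient f x, y - x⟫ ≤ ν)
    (hg_cvx : ConvexOn ℝ dg g) (hg_lsc : LowerSemicontinuousOn g dg)
    (hg_proper : dg.Nonempty)
    (t : ℝ) (ht : 0 < t)
    -- `x*_t` minimizes `f + t⁻¹ g` over `ℝⁿ`
    (xst : EuclideanSpace ℝ (Fin n)) (hxst : xst ∈ df ∩ dg)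
    (hmin : ∀ x ∈ df ∩ dg, f xst + t⁻¹ * g xst ≤ f x + t⁻¹ * g x)
    -- first-order optimality: `−t∇f(x*_t) ∈ ∂g(x*_t)`
    (hsubgrad : ∀ y ∈ dg, g xst + ⟪(-t) • gradient f xst, y - xst⟫ ≤ g y)
    -- `x* ∈ Ω` with `g(x*)` finite minimizes `g` over `Ω`
    (xs : EuclideanSpace ℝ (Fin n)) (hxs_mem : xs ∈ closure df) (hxs_dg : xs ∈ dg)
    (hgs_min : ∀ y ∈ closure df ∩ dg, g xs ≤ g y) :
    0 ≤ g xst - g xs ∧ g xst - g xs ≤ t * ν := by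
  constructor
  · have h := hgs_min xst ⟨subset_closure hxst.1, hxst.2⟩
    linarith
  · have h := hsubgrad xs hxs_dg
    rw [inner_smul_left] at h
    have hb := hbarrier xst hxst.1 xs hxs_mem
    have : g xst - g xs ≤ t * ⟪gradient f xst, xs - xst⟫ := by
      simp only [RCLike.conj_to_real] at h; linarith
    calc g xst - g xs ≤ t * ⟪gradient f xst, xs - xst⟫ := this
      _ ≤ t * ν := by nlinarith
end
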